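/- arXiv:2205.09844 — 5 statements merged into one kernel-verified Lean document; each statement's English description precedes it below -/
import Mathlib

section
/- Let K be a subset of QC(A,A'), the set of quantum channels from A to A'. Then K has control if and only if K is convex. -/
noncomputable section
open scoped ComplexOrder
attribute [local instance] Classical.propDecidable
attribute [local instance] FintypeCat.fintype

/-- Square matrices over `ℂ` indexed by `A`: the operators on the Hilbert space `ℂ^A`. -/
abbrev Mat (A : Type) : Type := Matrix A A ℂ

/-- The tensor product (Kronecker product) of two linear maps between matrix algebras. -/
noncomputable def tensorMap {A B A' B' : Type} [Fintype A] [Fintype B]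
    (φ : Mat A →ₗ[ℂ] Mat A') (ψ : Mat B →ₗ[ℂ] Mat B') :
    Mat (A × B) →ₗ[ℂ] Mat (A' × B') where
  toFun X := fun p q =>
    ∑ i : A, ∑ k : A, ∑ j : B, ∑ l : B,
      X (i, j) (k, l) * (φ (Matrix.single i k 1) p.1 q.1 *
        ψ (Matrix.single j l 1) p.2 q.2)
  map_add' X Y := by
    funext p q
    conv_rhs => erw [Matrix.add_apply]
    simp [Matrix.add_apply, add_mul, Finset.sum_add_distrib]
  map_smul' c X := by
    funext p q
    conv_rhs => erw [Matrix.smul_apply]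
    simp [Matrix.smul_apply, Finset.mul_sum, smul_eq_mul, mul_assoc]

/-- Partial trace over the second tensor factor. -/
noncomputable def ptrace {A X : Type} [Fintype X] : Mat (A × X) →ₗ[ℂ] Mat A where
  toFun M := fun a b => ∑ x : X, M (a, x) (b, x)
  map_add' M N := by funext a b; (conv_rhs => erw [Matrix.add_apply]); simp [Matrix.add_apply, Finset.sum_add_distrib]
  map_smul' c M := by funext a b; (conv_rhs => erw [Matrix.smul_apply]); simp [Matrix.smul_apply, Finset.mul_sum, smul_eq_mul]

/-- Tensoring with a fixed state on the right: `M ↦ M ⊗ ρ`. -/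
noncomputable def prep {A X : Type} (ρ : Mat X) : Mat A →ₗ[ℂ] Mat (A × X) where
  toFun M := fun p q => M p.1 q.1 * ρ p.2 q.2
  map_add' M N := by funext p q; (conv_rhs => erw [Matrix.add_apply]); simp [Matrix.add_apply, add_mul]
  map_smul' c M := by funext p q; (conv_rhs => erw [Matrix.smul_apply]); simp [Matrix.smul_apply, smul_eq_mul, mul_assoc]

/-- Applying a (possibly unnormalised) effect, given by a matrix `e`, to the second
tensor factor: `id ⊗ tr(e ·)`. -/
noncomputable def effApp {A X : Type} [Fintype X] (e : Mat X) : Mat (A × X) →ₗ[ℂ] Mat A where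
  toFun M := fun a b => ∑ x : X, ∑ y : X, M (a, x) (b, y) * e y x
  map_add' M N := by funext a b; (conv_rhs => erw [Matrix.add_apply]); simp [Matrix.add_apply, add_mul, Finset.sum_add_distrib]
  map_smul' c M := by funext a b; (conv_rhs => erw [Matrix.smul_apply]); simp [Matrix.smul_apply, Finset.mul_sum, smul_eq_mul, mul_assoc]

/-- A density operator: positive semidefinite with unit trace. -/
def IsDensity {X : Type} [Fintype X] (ρ : Mat X) : Prop :=
  ρ.PosSemidef ∧ ρ.trace = 1

/-- Complete positivity of a linear map between matrix algebras. -/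
def IsCP {A A' : Type} [Fintype A] [Fintype A'] (φ : Mat A →ₗ[ℂ] Mat A') : Prop :=
  ∀ (E : FintypeCat.{0}) (X : Mat (A × E)), X.PosSemidef →
    ((tensorMap φ (LinearMap.id : Mat E →ₗ[ℂ] Mat E)) X).PosSemidef

/-- A quantum channel: a completely positive trace-preserving map. -/
def IsChannel {A A' : Type} [Fintype A] [Fintype A'] (φ : Mat A →ₗ[ℂ] Mat A') : Prop :=
  IsCP φ ∧ ∀ X : Mat A, (φ X).trace = X.trace

/-- The dilation extension of a set `K` of channels by ancillary systems `X, X'`: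
those channels `Φ : A ⊗ X → A' ⊗ X'` all of whose reductions by states on `X` and the
trace on `X'` lie in `K`. -/
def dExt {A A' : Type} [Fintype A] [Fintype A'] (K : Set (Mat A →ₗ[ℂ] Mat A'))
    (X X' : Type) [Fintype X] [Fintype X'] :
    Set (Mat (A × X) →ₗ[ℂ] Mat (A' × X')) :=
  {Φ | IsChannel Φ ∧ ∀ ρ : Mat X, IsDensity ρ → (ptrace ∘ₗ Φ ∘ₗ prep ρ) ∈ K}

/-- Closure under convex combinations. -/
def IsConvexSet {A A' : Type} (K : Set (Mat A →ₗ[ℂ] Mat A')) : Prop :=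
  ∀ φ₀ ∈ K, ∀ φ₁ ∈ K, ∀ p : ℝ, 0 ≤ p → p ≤ 1 →
    ((p : ℂ) • φ₀ + (1 - (p : ℂ)) • φ₁) ∈ K

/-- The discard-prepare channel `M ↦ tr(M) • ρ`. -/
noncomputable def discardPrep {A A' : Type} [Fintype A] (ρ : Mat A') : Mat A →ₗ[ℂ] Mat A' :=
  (Matrix.traceLinearMap A ℂ ℂ).smulRight ρ

/-- A normal set of channels: one containing every discard-prepare channel. -/
def IsNormalSet {A A' : Type} [Fintype A] [Fintype A'] (K : Set (Mat A →ₗ[ℂ] Mat A')) : Prop :=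
  ∀ ρ : Mat A', IsDensity ρ → discardPrep ρ ∈ K

/-- Matrix reassociation `(A ⊗ X) ⊗ Y → A ⊗ (X ⊗ Y)` as a linear map. -/
noncomputable def assocL (A X Y : Type) : Mat ((A × X) × Y) →ₗ[ℂ] Mat (A × (X × Y)) :=
  (Matrix.reindexLinearEquiv ℂ ℂ (Equiv.prodAssoc A X Y) (Equiv.prodAssoc A X Y)).toLinearMap

/-- Matrix reassociation `A ⊗ (X ⊗ Y) → (A ⊗ X) ⊗ Y` as a linear map. -/
noncomputable def assocR (A X Y : Type) : Mat (A × (X × Y)) →ₗ[ℂ] Mat ((A × X) × Y) :=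
  (Matrix.reindexLinearEquiv ℂ ℂ (Equiv.prodAssoc A X Y).symm
    (Equiv.prodAssoc A X Y).symm).toLinearMap

/-- `(id_{A'} ⊗ g) ∘ (Φ ⊗ id_Z) ∘ (id_A ⊗ f)`, suppressing associativity isomorphisms. -/
noncomputable def slide {A A' X X' Y Y' Z : Type}
    [Fintype A] [Fintype A'] [Fintype X] [Fintype X'] [Fintype Y] [Fintype Y'] [Fintype Z]
    (f : Mat Y →ₗ[ℂ] Mat (X × Z)) (g : Mat (X' × Z) →ₗ[ℂ] Mat Y')
    (Φ : Mat (A × X) →ₗ[ℂ] Mat (A' × X')) : Mat (A × Y) →ₗ[ℂ] Mat (A' × Y') :=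
  tensorMap (LinearMap.id : Mat A' →ₗ[ℂ] Mat A') g ∘ₗ assocL A' X' Z ∘ₗ
    tensorMap Φ (LinearMap.id : Mat Z →ₗ[ℂ] Mat Z) ∘ₗ assocR A X Z ∘ₗ
      tensorMap (LinearMap.id : Mat A →ₗ[ℂ] Mat A) f

/-- A locally-applicable transformation of type `K → M` on the category of quantum
channels: a family of functions between dilation extensions commuting with all local
actions on the ancillary systems. -/
structure LocApp {A A' B B' : Type} [Fintype A] [Fintype A'] [Fintype B] [Fintype B']
    (K : Set (Mat A →ₗ[ℂ] Mat A')) (M : Set (Mat B →ₗ[ℂ] Mat B')) where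
  app : ∀ (X X' : FintypeCat.{0}), ↥(dExt K X X') → ↥(dExt M X X')
  natural : ∀ (X X' Y Y' Z : FintypeCat.{0})
      (f : Mat Y →ₗ[ℂ] Mat (X × Z)) (g : Mat (X' × Z) →ₗ[ℂ] Mat Y'),
      IsChannel f → IsChannel g →
      ∀ (Φ : ↥(dExt K X X')) (h : slide f g Φ.1 ∈ dExt K Y Y'),
        (app Y Y' ⟨slide f g Φ.1, h⟩).1 = slide f g (app X X' Φ).1

/-- A set of channels has control if any two members of a common dilation extension
arise as reductions of a single member by a pair of density operators. -/
def HasControl {A A' : Type} [Fintype A] [Fintype A'] (K : Set (Mat A →ₗ[ℂ] Mat A')) : Prop :=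
  ∀ (X X' : FintypeCat.{0}), ∀ φ₀ ∈ dExt K X X', ∀ φ₁ ∈ dExt K X X',
    ∃ (Y Y' : FintypeCat.{0}) (Φ : Mat (A × (X × Y)) →ₗ[ℂ] Mat (A' × (X' × Y')))
      (ρ₀ ρ₁ : Mat Y),
      Φ ∈ dExt K (X × Y) (X' × Y') ∧ IsDensity ρ₀ ∧ IsDensity ρ₁ ∧
      ptrace ∘ₗ assocR A' X' Y' ∘ₗ Φ ∘ₗ assocL A X Y ∘ₗ prep ρ₀ = φ₀ ∧
      ptrace ∘ₗ assocR A' X' Y' ∘ₗ Φ ∘ₗ assocL A X Y ∘ₗ prep ρ₁ = φ₁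

/-- The Choi matrix of a linear map between matrix algebras. -/
noncomputable def choi {A A' : Type} [Fintype A] (φ : Mat A →ₗ[ℂ] Mat A') : Mat (A × A') :=
  fun p q => φ (Matrix.single p.1 q.1 1) p.2 q.2

/-- The linear map associated to a Choi matrix. -/
noncomputable def ofChoi {A A' : Type} [Fintype A] (C : Mat (A × A')) :
    Mat A →ₗ[ℂ] Mat A' where
  toFun X := fun a' b' => ∑ a : A, ∑ b : A, X a b * C (a, a') (b, b')
  map_add' M N := by funext a b; (conv_rhs => erw [Matrix.add_apply]); simp [Matrix.add_apply, add_mul, Finset.sum_add_distrib]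
  map_smul' c M := by funext a b; (conv_rhs => erw [Matrix.smul_apply]); simp [Matrix.smul_apply, Finset.mul_sum, smul_eq_mul, mul_assoc]

/-- The action of a supermap `S` (given in Choi form) on an extended channel, by tensor
extension with the identity on the ancillary systems. -/
noncomputable def supAct {A A' B B' : Type} [Fintype A] [Fintype A'] [Fintype B] [Fintype B']
    (S : Mat (A × A') →ₗ[ℂ] Mat (B × B')) (X X' : Type) [Fintype X] [Fintype X']
    (Φ : Mat (A × X) →ₗ[ℂ] Mat (A' × X')) : Mat (B × X) →ₗ[ℂ] Mat (B' × X') :=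
  ofChoi ((Matrix.reindexLinearEquiv ℂ ℂ (Equiv.prodProdProdComm B B' X X')
      (Equiv.prodProdProdComm B B' X X'))
    ((tensorMap S (LinearMap.id : Mat (X × X') →ₗ[ℂ] Mat (X × X')))
      ((Matrix.reindexLinearEquiv ℂ ℂ (Equiv.prodProdProdComm A X A' X')
        (Equiv.prodProdProdComm A X A' X')) (choi Φ))))

/-- A quantum supermap of type `K → M`, in Choi representation: a completely positive
map on Choi operators whose tensor extension with the identity sends each dilation
extension of `K` into the corresponding dilation extension of `M`. -/
def IsSupermap {A A' B B' : Type} [Fintype A] [Fintype A'] [Fintype B] [Fintype B']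
    (K : Set (Mat A →ₗ[ℂ] Mat A')) (M : Set (Mat B →ₗ[ℂ] Mat B'))
    (S : Mat (A × A') →ₗ[ℂ] Mat (B × B')) : Prop :=
  IsCP S ∧ ∀ (X X' : FintypeCat.{0}), ∀ Φ ∈ dExt K X X', supAct S X X' Φ ∈ dExt M X X'

namespace ControlConvex

@[simp] lemma addHom_mk_mat_apply {A B : Type} (f : Mat A → Mat B) (h) (M : Mat A) (u v : B) :
    (AddHom.mk f h : AddHom (Mat A) (Mat B)) M u v = f M u v := rfl

@[simp] lemma linMap_mk_mat_apply {A B : Type} (f : AddHom (Mat A) (Mat B)) (h) (M : Mat A)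
    (u v : B) : (LinearMap.mk f h : Mat A →ₗ[ℂ] Mat B) M u v = f M u v := rfl

/-- submatrix as a linear map. -/
noncomputable def subLM {n m : Type} (h : n → m) : Mat m →ₗ[ℂ] Mat n where
  toFun M := M.submatrix h h
  map_add' M N := by ext a b; simp [Matrix.submatrix_apply]
  map_smul' c M := by ext a b; simp [Matrix.submatrix_apply]

@[simp] lemma subLM_apply {n m : Type} (h : n → m) (M : Mat m) (a b : n) :
    subLM h M a b = M (h a) (h b) := rfl

lemma map_apply_eq_sum {A A' : Type} [Fintype A] (φ : Mat A →ₗ[ℂ] Mat A') (M : Mat A)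
    (a b : A') : φ M a b = ∑ i : A, ∑ k : A, M i k * φ (Matrix.single i k 1) a b := by
  conv_lhs => rw [Matrix.matrix_eq_sum_single M]
  rw [map_sum]
  simp only [Finset.sum_apply, Matrix.sum_apply]
  refine Finset.sum_congr rfl fun i _ => ?_
  rw [map_sum]
  simp only [Finset.sum_apply, Matrix.sum_apply]
  refine Finset.sum_congr rfl fun k _ => ?_
  have : Matrix.single i k (M i k) = M i k • Matrix.single i k (1:ℂ) := by
    simp
  rw [this, map_smul]
  simp

lemma sum_swap4 {α β : Type} [Fintype α] [Fintype β] (F : α → α → β → β → ℂ) :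
    ∑ i : α, ∑ k : α, ∑ i' : β, ∑ k' : β, F i k i' k'
      = ∑ i' : β, ∑ k' : β, ∑ i : α, ∑ k : α, F i k i' k' :=
  calc ∑ i : α, ∑ k : α, ∑ i' : β, ∑ k' : β, F i k i' k'
      = ∑ i : α, ∑ i' : β, ∑ k : α, ∑ k' : β, F i k i' k' :=
        Finset.sum_congr rfl fun i _ => Finset.sum_comm
    _ = ∑ i' : β, ∑ i : α, ∑ k : α, ∑ k' : β, F i k i' k' := Finset.sum_comm
    _ = ∑ i' : β, ∑ i : α, ∑ k' : β, ∑ k : α, F i k i' k' :=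
        Finset.sum_congr rfl fun i' _ => Finset.sum_congr rfl fun i _ => Finset.sum_comm
    _ = ∑ i' : β, ∑ k' : β, ∑ i : α, ∑ k : α, F i k i' k' :=
        Finset.sum_congr rfl fun i' _ => Finset.sum_comm

lemma tensorMap_id_apply {A A' : Type} [Fintype A] {E : Type} [Fintype E]
    (φ : Mat A →ₗ[ℂ] Mat A') (X : Mat (A × E)) (p q : A' × E) :
    tensorMap φ (LinearMap.id : Mat E →ₗ[ℂ] Mat E) X p q
      = ∑ i : A, ∑ k : A, X (i, p.2) (k, q.2) * φ (Matrix.single i k 1) p.1 q.1 := by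
  simp only [tensorMap, LinearMap.coe_mk, AddHom.coe_mk, LinearMap.id_coe, id_eq]
  refine Finset.sum_congr rfl fun i _ => Finset.sum_congr rfl fun k _ => ?_
  have hd : ∀ j l : E, X (i, j) (k, l) *
      (φ (Matrix.single i k 1) p.1 q.1 * Matrix.single j l 1 p.2 q.2)
      = if j = p.2 ∧ l = q.2 then
          X (i, j) (k, l) * φ (Matrix.single i k 1) p.1 q.1 else 0 := by
    intro j l
    by_cases h1 : j = p.2 <;> by_cases h2 : l = q.2 <;>
      simp [Matrix.single, h1, h2]
  simp only [hd]
  rw [Finset.sum_eq_single p.2]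
  · rw [Finset.sum_eq_single q.2]
    · simp
    · intro l _ hl; simp [hl]
    · intro h; exact absurd (Finset.mem_univ _) h
  · intro j _ hj; exact Finset.sum_eq_zero fun l _ => by simp [hj]
  · intro h; exact absurd (Finset.mem_univ _) h

lemma tensorMap_comp_id {A B C : Type} [Fintype A] [Fintype B] {E : Type} [Fintype E]
    (f : Mat B →ₗ[ℂ] Mat C) (g : Mat A →ₗ[ℂ] Mat B) :
    tensorMap (f ∘ₗ g) (LinearMap.id : Mat E →ₗ[ℂ] Mat E)
      = tensorMap f (LinearMap.id : Mat E →ₗ[ℂ] Mat E)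
          ∘ₗ tensorMap g (LinearMap.id : Mat E →ₗ[ℂ] Mat E) := by
  refine LinearMap.ext fun X => ?_
  funext p q
  rw [LinearMap.comp_apply, tensorMap_id_apply, tensorMap_id_apply]
  simp only [LinearMap.comp_apply]
  have hf : ∀ i k : A, f (g (Matrix.single i k 1)) p.1 q.1
      = ∑ i' : B, ∑ k' : B, g (Matrix.single i k 1) i' k'
          * f (Matrix.single i' k' 1) p.1 q.1 := fun i k =>
    map_apply_eq_sum f _ _ _
  simp only [hf]
  have hg : ∀ (i' k' : B), tensorMap g (LinearMap.id : Mat E →ₗ[ℂ] Mat E) X (i', p.2) (k', q.2)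
      = ∑ i : A, ∑ k : A, X (i, p.2) (k, q.2) * g (Matrix.single i k 1) i' k' := by
    intro i' k'
    exact tensorMap_id_apply g X (i', p.2) (k', q.2)
  simp only [hg]
  simp only [Finset.mul_sum, Finset.sum_mul]
  rw [sum_swap4 (fun i k i' k' => X (i, p.2) (k, q.2) *
    (g (Matrix.single i k 1) i' k' * f (Matrix.single i' k' 1) p.1 q.1))]
  refine Finset.sum_congr rfl fun i' _ => Finset.sum_congr rfl fun k' _ =>
    Finset.sum_congr rfl fun i _ => Finset.sum_congr rfl fun k _ => by ring

end ControlConvex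
namespace ControlConvex

lemma tensorMap_add_left {A A' B B' : Type} [Fintype A] [Fintype B]
    (f g : Mat A →ₗ[ℂ] Mat A') (h : Mat B →ₗ[ℂ] Mat B') :
    tensorMap (f + g) h = tensorMap f h + tensorMap g h := by
  refine LinearMap.ext fun X => ?_
  funext p q
  simp [tensorMap, add_mul, mul_add, Finset.sum_add_distrib]
  rfl

lemma tensorMap_subLM_id {n m E : Type} [Fintype m] [Fintype E] (h : n → m) (X : Mat (m × E)) :
    tensorMap (subLM h) (LinearMap.id : Mat E →ₗ[ℂ] Mat E) X
      = X.submatrix (Prod.map h _root_.id) (Prod.map h _root_.id) := by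
  funext p q
  rw [tensorMap_id_apply]
  have hd : ∀ i k : m, X (i, p.2) (k, q.2) * subLM h (Matrix.single i k 1) p.1 q.1
      = if i = h p.1 ∧ k = h q.1 then X (i, p.2) (k, q.2) else 0 := by
    intro i k
    by_cases h1 : i = h p.1 <;> by_cases h2 : k = h q.1 <;>
      simp [Matrix.single, h1, h2]
  simp only [hd]
  rw [Finset.sum_eq_single (h p.1)]
  · rw [Finset.sum_eq_single (h q.1)]
    · simp [Matrix.submatrix_apply, Prod.map]
    · intro k _ hk; simp [hk]
    · intro hh; exact absurd (Finset.mem_univ _) hh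
  · intro i _ hi; exact Finset.sum_eq_zero fun k _ => by simp [hi]
  · intro hh; exact absurd (Finset.mem_univ _) hh

lemma isCP_comp {A B C : Type} [Fintype A] [Fintype B] [Fintype C]
    {f : Mat B →ₗ[ℂ] Mat C} {g : Mat A →ₗ[ℂ] Mat B} (hf : IsCP f) (hg : IsCP g) :
    IsCP (f ∘ₗ g) := fun E X hX => by
  rw [tensorMap_comp_id]
  exact hf E _ (hg E X hX)

lemma isCP_add {A B : Type} [Fintype A] [Fintype B]
    {f g : Mat A →ₗ[ℂ] Mat B} (hf : IsCP f) (hg : IsCP g) : IsCP (f + g) := fun E X hX => by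
  rw [tensorMap_add_left]
  exact (hf E X hX).add (hg E X hX)

lemma isCP_subLM {n m : Type} [Fintype n] [Fintype m] (h : n → m) : IsCP (subLM h) :=
  fun E X hX => by
    rw [tensorMap_subLM_id]
    exact hX.submatrix _

lemma psd_smul {n : Type} [Fintype n] {M : Mat n} (hM : M.PosSemidef) {c : ℂ} (hc : 0 ≤ c) :
    (c • M).PosSemidef := by
  have hcs : star c = c := by
    rw [Complex.star_def, Complex.conj_eq_iff_im]
    exact ((Complex.nonneg_iff).mp hc).2.symm ▸ rfl
  constructor
  · unfold Matrix.IsHermitian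
    rw [Matrix.conjTranspose_smul, hcs, hM.1]
  · intro x
    exact (hM.smul hc).2 x

lemma psd_diag_nonneg {n : Type} [Fintype n] {M : Mat n} (hM : M.PosSemidef) (i : n) :
    0 ≤ M i i := by
  exact hM.diag_nonneg

lemma psd_trace_nonneg {n : Type} [Fintype n] {M : Mat n} (hM : M.PosSemidef) :
    0 ≤ M.trace :=
  Finset.sum_nonneg fun i _ => psd_diag_nonneg hM i

lemma psd_trace_zero {n : Type} [Fintype n] {M : Mat n} (hM : M.PosSemidef)
    (h : M.trace = 0) : M = 0 := by
  exact hM.trace_eq_zero_iff.mp h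

end ControlConvex
namespace ControlConvex

/-- Remove a trivial `PUnit` tensor factor. -/
noncomputable def piA (A : Type) : Mat (A × PUnit) →ₗ[ℂ] Mat A :=
  subLM (fun a => (a, PUnit.unit))

/-- Add a trivial `PUnit` tensor factor. -/
noncomputable def iotaA (A : Type) : Mat A →ₗ[ℂ] Mat (A × PUnit) := subLM Prod.fst

/-- Embed a channel `A → A'` as a channel `A ⊗ I → A' ⊗ I`. -/
noncomputable def embMap {A A' : Type} [Fintype A] [Fintype A'] (φ : Mat A →ₗ[ℂ] Mat A') :
    Mat (A × PUnit) →ₗ[ℂ] Mat (A' × PUnit) :=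
  iotaA A' ∘ₗ φ ∘ₗ piA A

lemma isChannel_embMap {A A' : Type} [Fintype A] [Fintype A'] {φ : Mat A →ₗ[ℂ] Mat A'}
    (hφ : IsChannel φ) : IsChannel (embMap φ) := by
  constructor
  · exact isCP_comp (isCP_subLM _) (isCP_comp hφ.1 (isCP_subLM _))
  · intro M
    have h1 : ∀ N : Mat A', (iotaA A' N).trace = N.trace := by
      intro N
      simp [Matrix.trace, Matrix.diag, iotaA, Fintype.sum_prod_type]
    have h2 : (piA A M).trace = M.trace := by
      simp [Matrix.trace, Matrix.diag, piA, Fintype.sum_prod_type]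
    simp only [embMap, LinearMap.comp_apply, h1, hφ.2, h2]

lemma embMap_mem {A A' : Type} [Fintype A] [Fintype A'] {K : Set (Mat A →ₗ[ℂ] Mat A')}
    {φ : Mat A →ₗ[ℂ] Mat A'} (hφK : φ ∈ K) (hφ : IsChannel φ) :
    embMap φ ∈ dExt K PUnit PUnit := by
  refine ⟨isChannel_embMap hφ, fun ρ hρ => ?_⟩
  have hρ1 : ρ PUnit.unit PUnit.unit = 1 := by
    have := hρ.2
    simpa [Matrix.trace, Matrix.diag] using this
  have : ptrace ∘ₗ embMap φ ∘ₗ prep ρ = φ := by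
    refine LinearMap.ext fun M => ?_
    funext a b
    have harg : piA A (prep ρ M) = M := by
      funext a' b'
      simp [piA, prep, hρ1]
      rfl
    simp [ptrace, embMap, iotaA, harg]
    rfl
  rw [this]
  exact hφK

lemma sum_punit_prod {Y : Type} [Fintype Y] (g : PUnit.{1} × Y → ℂ) :
    ∑ x : PUnit.{1} × Y, g x = ∑ y : Y, g (PUnit.unit, y) := by
  rw [Fintype.sum_prod_type, Fintype.sum_unique]

lemma piA_iotaA {A : Type} (M : Mat A) : piA A (iotaA A M) = M := by
  funext a b; simp [piA, iotaA]

lemma unemb {A A' : Type} [Fintype A] [Fintype A'] (φ : Mat A →ₗ[ℂ] Mat A') :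
    piA A' ∘ₗ embMap φ ∘ₗ iotaA A = φ := by
  refine LinearMap.ext fun M => ?_
  simp only [embMap, LinearMap.comp_apply, piA_iotaA]

lemma control_to_convex {A A' : FintypeCat.{0}} {K : Set (Mat A →ₗ[ℂ] Mat A')}
    (hK : ∀ φ ∈ K, IsChannel φ) (hC : HasControl K) : IsConvexSet K := by
  intro φ₀ h0 φ₁ h1 p hp0 hp1
  obtain ⟨Y, Y', Φ₀, ρ₀, ρ₁, hΦ₀, hd0, hd1, he0', he1'⟩ :=
    hC (FintypeCat.of PUnit) (FintypeCat.of PUnit)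
      (embMap φ₀) (by convert embMap_mem h0 (hK _ h0)) (embMap φ₁)
      (by convert embMap_mem h1 (hK _ h1))
  -- retype everything with a literal `PUnit`
  let Φ : Mat (↑A × (PUnit.{1} × ↑Y)) →ₗ[ℂ] Mat (↑A' × (PUnit.{1} × ↑Y')) := Φ₀
  have hΦ : Φ ∈ dExt K (PUnit.{1} × ↑Y) (PUnit.{1} × ↑Y') := by convert hΦ₀
  have he0 : ptrace ∘ₗ assocR ↑A' PUnit.{1} ↑Y' ∘ₗ Φ ∘ₗ assocL ↑A PUnit.{1} ↑Y ∘ₗ prep ρ₀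
      = embMap φ₀ := by convert he0'
  have he1 : ptrace ∘ₗ assocR ↑A' PUnit.{1} ↑Y' ∘ₗ Φ ∘ₗ assocL ↑A PUnit.{1} ↑Y ∘ₗ prep ρ₁
      = embMap φ₁ := by convert he1'
  clear he0' he1' hΦ₀
  -- the lifted densities
  set lift : Mat Y →ₗ[ℂ] Mat (PUnit.{1} × Y) := subLM Prod.snd with hlift
  -- key identity: the reduction of `Φ` by a lifted state
  have key : ∀ ρ : Mat Y,
      ptrace ∘ₗ Φ ∘ₗ prep (lift ρ)
        = piA ↑A' ∘ₗ (ptrace ∘ₗ assocR ↑A' PUnit.{1} ↑Y' ∘ₗ Φ ∘ₗ assocL ↑A PUnit.{1} ↑Y ∘ₗ prep ρ)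
            ∘ₗ iotaA ↑A := by
    intro ρ
    refine LinearMap.ext fun M => ?_
    funext a b
    have harg : assocL ↑A PUnit.{1} ↑Y (prep ρ (iotaA ↑A M)) = prep (lift ρ) M := by
      funext pq rs
      simp [assocL, prep, iotaA, hlift, Matrix.reindexLinearEquiv_apply,
        Matrix.reindex_apply, Matrix.submatrix_apply, Equiv.prodAssoc]
      rfl
    simp only [LinearMap.comp_apply, harg]
    simp only [ptrace, piA, subLM_apply, assocR, Matrix.reindexLinearEquiv_apply,
      Matrix.reindex_apply, Matrix.submatrix_apply, LinearMap.coe_mk, AddHom.coe_mk,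
      LinearEquiv.coe_coe, Equiv.symm_symm, Equiv.prodAssoc_apply]
    show ∑ x : PUnit.{1} × ↑Y', Φ (prep (lift ρ) M) (a, x) (b, x)
      = ∑ y : ↑Y', Φ (prep (lift ρ) M) (a, (PUnit.unit, y)) (b, (PUnit.unit, y))
    rw [sum_punit_prod (fun x => Φ (prep (lift ρ) M) (a, x) (b, x))]
  have hred0 : ptrace ∘ₗ Φ ∘ₗ prep (lift ρ₀) = φ₀ := by
    rw [key ρ₀, he0, unemb]
  have hred1 : ptrace ∘ₗ Φ ∘ₗ prep (lift ρ₁) = φ₁ := by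
    rw [key ρ₁, he1, unemb]
  set ρp : Mat Y := (p:ℂ) • ρ₀ + (1 - (p:ℂ)) • ρ₁ with hρp
  have hp0' : (0:ℂ) ≤ (p:ℂ) := by
    rw [Complex.zero_le_real]; exact hp0
  have hp1' : (0:ℂ) ≤ (1 - (p:ℂ)) := by
    rw [show ((1:ℂ) - (p:ℂ)) = ((1 - p : ℝ) : ℂ) by push_cast; ring, Complex.zero_le_real]
    linarith
  have hdens : IsDensity (lift ρp) := by
    constructor
    · exact (((psd_smul hd0.1 hp0').add (psd_smul hd1.1 hp1'))).submatrix _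
    · have h1 : (lift ρp).trace = ρp.trace := by
        show ∑ x : PUnit.{1} × ↑Y, (lift ρp) x x = _
        rw [sum_punit_prod (fun x => (lift ρp) x x)]
        rfl
      rw [h1, hρp]
      simp only [Matrix.trace_add, Matrix.trace_smul, hd0.2, hd1.2, smul_eq_mul]
      ring
  have hlin : ptrace ∘ₗ Φ ∘ₗ prep (lift ρp)
      = (p:ℂ) • (ptrace ∘ₗ Φ ∘ₗ prep (lift ρ₀)) + (1 - (p:ℂ)) • (ptrace ∘ₗ Φ ∘ₗ prep (lift ρ₁)) := by
    refine LinearMap.ext fun M => ?_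
    have hprep : prep (lift ρp) M
        = (p:ℂ) • prep (lift ρ₀) M + (1 - (p:ℂ)) • prep (lift ρ₁) M := by
      funext x y
      show M x.1 y.1 * ((p:ℂ) * ρ₀ x.2.2 y.2.2 + (1 - (p:ℂ)) * ρ₁ x.2.2 y.2.2)
        = (p:ℂ) * (M x.1 y.1 * ρ₀ x.2.2 y.2.2) + (1 - (p:ℂ)) * (M x.1 y.1 * ρ₁ x.2.2 y.2.2)
      ring
    simp only [LinearMap.comp_apply, hprep, map_add, map_smul]
    rfl
  have hmem := hΦ.2 (lift ρp) hdens
  rw [hlin, hred0, hred1] at hmem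
  exact hmem

end ControlConvex
namespace ControlConvex

section Construct

variable {A A' X X' : Type} [Fintype A] [Fintype A'] [Fintype X] [Fintype X']

/-- Pick out the `y`-block of the control system. -/
noncomputable def blockMap (A X : Type) (y : Fin 2) :
    Mat (A × (X × Fin 2)) →ₗ[ℂ] Mat (A × X) :=
  subLM (fun p => (p.1, (p.2, y)))

/-- Append a trivial `PUnit` factor to the second tensor factor. -/
noncomputable def iotaX' (A' X' : Type) : Mat (A' × X') →ₗ[ℂ] Mat (A' × (X' × PUnit.{1})) :=
  subLM (fun p => (p.1, p.2.1))

lemma sum_prod_punit {X : Type} [Fintype X] (g : X × PUnit.{1} → ℂ) :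
    ∑ z : X × PUnit.{1}, g z = ∑ x : X, g (x, PUnit.unit) := by
  rw [Fintype.sum_prod_type]
  exact Finset.sum_congr rfl fun x _ => Fintype.sum_unique _

lemma trace_iotaX' (N : Mat (A' × X')) : (iotaX' A' X' N).trace = N.trace := by
  simp only [Matrix.trace, Matrix.diag]
  rw [Fintype.sum_prod_type, Fintype.sum_prod_type]
  refine Finset.sum_congr rfl fun a _ => ?_
  rw [sum_prod_punit (fun w => iotaX' A' X' N (a, w) (a, w))]
  rfl

lemma trace_blocks (M : Mat (A × (X × Fin 2))) :
    (blockMap A X 0 M).trace + (blockMap A X 1 M).trace = M.trace := by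
  simp only [Matrix.trace, Matrix.diag, blockMap, subLM_apply, Fintype.sum_prod_type,
    Fin.sum_univ_two]
  rw [← Finset.sum_add_distrib]
  exact Finset.sum_congr rfl fun a _ => by rw [← Finset.sum_add_distrib]

lemma trace_sigma_blocks (ρ : Mat (X × Fin 2)) :
    (subLM (fun x : X => (x, (0 : Fin 2))) ρ).trace
      + (subLM (fun x : X => (x, (1 : Fin 2))) ρ).trace = ρ.trace := by
  simp only [Matrix.trace, Matrix.diag, subLM_apply, Fintype.sum_prod_type, Fin.sum_univ_two]
  exact (Finset.sum_add_distrib).symm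

lemma red_smul {φ : Mat (A × X) →ₗ[ℂ] Mat (A' × X')} (c : ℂ) (σ : Mat X) :
    ptrace ∘ₗ φ ∘ₗ prep (c • σ) = c • (ptrace ∘ₗ φ ∘ₗ prep σ) := by
  refine LinearMap.ext fun M => ?_
  have hp : prep (c • σ) M = c • prep σ M := by
    funext u v
    show M u.1 v.1 * (c * σ u.2 v.2) = c * (M u.1 v.1 * σ u.2 v.2)
    ring
  simp only [LinearMap.comp_apply, hp, map_smul]
  rfl

lemma red_zero {φ : Mat (A × X) →ₗ[ℂ] Mat (A' × X')} :
    ptrace ∘ₗ φ ∘ₗ prep (0 : Mat X) = 0 := by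
  refine LinearMap.ext fun M => ?_
  have hp : prep (0 : Mat X) M = 0 := by
    funext u v
    simp [prep]
    rfl
  simp only [LinearMap.comp_apply, hp, map_zero]
  rfl

lemma nonneg_eq_re {c : ℂ} (hc : 0 ≤ c) : ((c.re : ℝ) : ℂ) = c := by
  obtain ⟨h1, h2⟩ := Complex.nonneg_iff.mp hc
  exact Complex.ext rfl (by simp [h2])

lemma construct {K : Set (Mat A →ₗ[ℂ] Mat A')} (hconv : IsConvexSet K)
    {φ₀ φ₁ : Mat (A × X) →ₗ[ℂ] Mat (A' × X')}
    (h0 : φ₀ ∈ dExt K X X') (h1 : φ₁ ∈ dExt K X X') :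
    ∃ (Φ : Mat (A × (X × Fin 2)) →ₗ[ℂ] Mat (A' × (X' × PUnit.{1}))) (ρ₀ ρ₁ : Mat (Fin 2)),
      Φ ∈ dExt K (X × Fin 2) (X' × PUnit.{1}) ∧ IsDensity ρ₀ ∧ IsDensity ρ₁ ∧
      ptrace ∘ₗ assocR A' X' PUnit.{1} ∘ₗ Φ ∘ₗ assocL A X (Fin 2) ∘ₗ prep ρ₀ = φ₀ ∧
      ptrace ∘ₗ assocR A' X' PUnit.{1} ∘ₗ Φ ∘ₗ assocL A X (Fin 2) ∘ₗ prep ρ₁ = φ₁ := by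
  classical
  set Φ : Mat (A × (X × Fin 2)) →ₗ[ℂ] Mat (A' × (X' × PUnit.{1})) :=
    iotaX' A' X' ∘ₗ (φ₀ ∘ₗ blockMap A X 0 + φ₁ ∘ₗ blockMap A X 1) with hΦdef
  -- `Φ` is a channel
  have hCP : IsCP Φ :=
    isCP_comp (isCP_subLM _)
      (isCP_add (isCP_comp h0.1.1 (isCP_subLM _)) (isCP_comp h1.1.1 (isCP_subLM _)))
  have hTP : ∀ M : Mat (A × (X × Fin 2)), (Φ M).trace = M.trace := by
    intro M
    simp only [hΦdef, LinearMap.comp_apply, LinearMap.add_apply]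
    rw [trace_iotaX', Matrix.trace_add, h0.1.2, h1.1.2, trace_blocks]
  -- reduction formula
  have hredstruct : ∀ ρ : Mat (X × Fin 2),
      ptrace ∘ₗ Φ ∘ₗ prep ρ
        = (ptrace ∘ₗ φ₀ ∘ₗ prep (subLM (fun x : X => (x, (0 : Fin 2))) ρ))
          + (ptrace ∘ₗ φ₁ ∘ₗ prep (subLM (fun x : X => (x, (1 : Fin 2))) ρ)) := by
    intro ρ
    refine LinearMap.ext fun M => ?_
    funext a b
    have hB : ∀ y : Fin 2, blockMap A X y (prep ρ M)
        = prep (subLM (fun x : X => (x, y)) ρ) M := by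
      intro y; funext u v; rfl
    simp only [hΦdef, LinearMap.comp_apply, LinearMap.add_apply, hB]
    show ∑ z : X' × PUnit.{1}, _ = _
    rw [sum_prod_punit]
    simp only [iotaX', subLM_apply, Matrix.add_apply, LinearMap.add_apply, ptrace,
      LinearMap.coe_mk, AddHom.coe_mk, linMap_mk_mat_apply, addHom_mk_mat_apply]
    rw [Finset.sum_add_distrib]
    rfl
  -- each reduction lies in K
  have hmem : Φ ∈ dExt K (X × Fin 2) (X' × PUnit.{1}) := by
    refine ⟨⟨hCP, hTP⟩, fun ρ hρ => ?_⟩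
    rw [hredstruct ρ]
    set σ0 : Mat X := subLM (fun x : X => (x, (0 : Fin 2))) ρ with hσ0
    set σ1 : Mat X := subLM (fun x : X => (x, (1 : Fin 2))) ρ with hσ1
    have hpsd0 : σ0.PosSemidef := hρ.1.submatrix _
    have hpsd1 : σ1.PosSemidef := hρ.1.submatrix _
    have htsum : σ0.trace + σ1.trace = 1 := by
      rw [hσ0, hσ1, trace_sigma_blocks, hρ.2]
    by_cases hz0 : σ0.trace = 0
    · have hσ0z : σ0 = 0 := psd_trace_zero hpsd0 hz0
      have ht1 : σ1.trace = 1 := by rw [hz0, zero_add] at htsum; exact htsum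
      have hk1 : (ptrace ∘ₗ φ₁ ∘ₗ prep σ1) ∈ K := h1.2 σ1 ⟨hpsd1, ht1⟩
      rw [hσ0z, red_zero, zero_add]
      exact hk1
    · by_cases hz1 : σ1.trace = 0
      · have hσ1z : σ1 = 0 := psd_trace_zero hpsd1 hz1
        have ht0 : σ0.trace = 1 := by rw [hz1, add_zero] at htsum; exact htsum
        have hk0 : (ptrace ∘ₗ φ₀ ∘ₗ prep σ0) ∈ K := h0.2 σ0 ⟨hpsd0, ht0⟩
        rw [hσ1z, red_zero, add_zero]
        exact hk0
      · set t0 : ℂ := σ0.trace with ht0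
        set t1 : ℂ := σ1.trace with ht1
        have h0n : 0 ≤ t0 := psd_trace_nonneg hpsd0
        have h1n : 0 ≤ t1 := psd_trace_nonneg hpsd1
        have hinv0 : (0:ℂ) ≤ t0⁻¹ := by
          rw [← nonneg_eq_re h0n, ← Complex.ofReal_inv, Complex.zero_le_real]
          have := (Complex.nonneg_iff.mp h0n).1
          positivity
        have hinv1 : (0:ℂ) ≤ t1⁻¹ := by
          rw [← nonneg_eq_re h1n, ← Complex.ofReal_inv, Complex.zero_le_real]
          have := (Complex.nonneg_iff.mp h1n).1
          positivity
        have hd0 : IsDensity (t0⁻¹ • σ0) := by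
          refine ⟨psd_smul hpsd0 hinv0, ?_⟩
          rw [Matrix.trace_smul, ← ht0, smul_eq_mul, inv_mul_cancel₀ hz0]
        have hd1 : IsDensity (t1⁻¹ • σ1) := by
          refine ⟨psd_smul hpsd1 hinv1, ?_⟩
          rw [Matrix.trace_smul, ← ht1, smul_eq_mul, inv_mul_cancel₀ hz1]
        have hk0 : (ptrace ∘ₗ φ₀ ∘ₗ prep (t0⁻¹ • σ0)) ∈ K := h0.2 _ hd0
        have hk1 : (ptrace ∘ₗ φ₁ ∘ₗ prep (t1⁻¹ • σ1)) ∈ K := h1.2 _ hd1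
        have hr0 : ptrace ∘ₗ φ₀ ∘ₗ prep σ0
            = t0 • (ptrace ∘ₗ φ₀ ∘ₗ prep (t0⁻¹ • σ0)) := by
          rw [← red_smul, smul_inv_smul₀ hz0]
        have hr1 : ptrace ∘ₗ φ₁ ∘ₗ prep σ1
            = t1 • (ptrace ∘ₗ φ₁ ∘ₗ prep (t1⁻¹ • σ1)) := by
          rw [← red_smul, smul_inv_smul₀ hz1]
        rw [hr0, hr1]
        set p : ℝ := t0.re with hp
        have hpc : (p : ℂ) = t0 := nonneg_eq_re h0n
        have h1pc : (1 : ℂ) - (p : ℂ) = t1 := by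
          rw [hpc]; linear_combination -htsum
        have hp0 : 0 ≤ p := (Complex.nonneg_iff.mp h0n).1
        have hp1 : p ≤ 1 := by
          have h1r : 0 ≤ t1.re := (Complex.nonneg_iff.mp h1n).1
          have hre : t0.re + t1.re = 1 := by
            have := congrArg Complex.re htsum
            simpa using this
          linarith
        have hfin := hconv _ hk0 _ hk1 p hp0 hp1
        rw [h1pc, hpc] at hfin
        exact hfin
  -- the basis states are densities
  have hbasis : ∀ y : Fin 2, IsDensity (Matrix.single y y (1:ℂ)) := by
    intro y
    constructor
    · have hdiag : Matrix.single y y (1:ℂ) = Matrix.diagonal (Pi.single y 1) := by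
        funext i j
        rcases eq_or_ne i j with rfl | hij
        · simp [Matrix.single, Pi.single_apply, eq_comm]
        · have hne : ¬(y = i ∧ y = j) := by rintro ⟨rfl, rfl⟩; exact hij rfl
          simp [Matrix.single, Matrix.diagonal_apply_ne _ hij, hne]
      rw [hdiag]
      exact Matrix.PosSemidef.diagonal (by
        intro i
        by_cases h : i = y <;> simp [Pi.single_apply, h])
    · fin_cases y <;>
        simp [Matrix.trace, Matrix.diag, Matrix.single, Fin.sum_univ_two]
  -- reduction by a basis state selects a block
  have hpull : ∀ (z y : Fin 2) (M : Mat (A × X)),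
      blockMap A X z (assocL A X (Fin 2) (prep (Matrix.single y y (1:ℂ)) M))
        = if z = y then M else 0 := by
    intro z y M
    funext u v
    by_cases h : z = y
    · subst h
      simp [blockMap, assocL, prep, Matrix.single, Matrix.reindexLinearEquiv_apply,
        Matrix.reindex_apply, Matrix.submatrix_apply, Equiv.prodAssoc]
      show (if z = z ∧ z = z then M u v else 0) = M u v
      simp
    · have h' : ¬ (y = z) := fun hh => h hh.symm
      simp [blockMap, assocL, prep, Matrix.single, Matrix.reindexLinearEquiv_apply,
        Matrix.reindex_apply, Matrix.submatrix_apply, Equiv.prodAssoc, h, h']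
      show (if y = z ∧ y = z then M u v else 0) = 0
      simp [h']
  -- removing the trivial output ancilla
  have hfin : ∀ N : Mat (A' × X'),
      ptrace (assocR A' X' PUnit.{1} (iotaX' A' X' N)) = N := by
    intro N
    funext pp qq
    show (∑ u : PUnit.{1},
      assocR A' X' PUnit.{1} (iotaX' A' X' N) (pp, u) (qq, u)) = N pp qq
    rw [Fintype.sum_unique]
    simp [assocR, iotaX', Matrix.reindexLinearEquiv_apply, Matrix.reindex_apply,
      Matrix.submatrix_apply, Equiv.prodAssoc]
  have hred : ∀ y : Fin 2,
      ptrace ∘ₗ assocR A' X' PUnit.{1} ∘ₗ Φ ∘ₗ assocL A X (Fin 2)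
        ∘ₗ prep (Matrix.single y y (1:ℂ))
        = if (0 : Fin 2) = y then φ₀ else φ₁ := by
    intro y
    refine LinearMap.ext fun M => ?_
    simp only [LinearMap.comp_apply, hΦdef, LinearMap.add_apply, hpull]
    fin_cases y <;> simp [hfin]
  refine ⟨Φ, Matrix.single 0 0 1, Matrix.single 1 1 1, hmem,
    hbasis 0, hbasis 1, ?_, ?_⟩
  · have := hred 0; rw [if_pos rfl] at this; exact this
  · have := hred 1; rw [if_neg (by decide)] at this; exact this

end Construct

end ControlConvex
/-- A subset `K` of the quantum channels `QC(A,A')` has control if and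
only if it is convex. -/
theorem control_iff_convex (A A' : FintypeCat.{0})
    (K : Set (Mat A →ₗ[ℂ] Mat A')) (hK : ∀ φ ∈ K, IsChannel φ) :
    HasControl K ↔ IsConvexSet K := by
  constructor
  · exact fun hC => ControlConvex.control_to_convex hK hC
  · intro hconv X X' φ₀ h0 φ₁ h1
    obtain ⟨Φ, ρ₀, ρ₁, hmem, hd0, hd1, heq0, heq1⟩ := ControlConvex.construct hconv h0 h1
    refine ⟨FintypeCat.of (Fin 2), FintypeCat.of PUnit.{1}, Φ, ρ₀, ρ₁, ?_, ?_, ?_,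
      ?_, ?_⟩
    · convert hmem
    · convert hd0
    · convert hd1
    · convert heq0
    · convert heq1
end
end

section
/- Let C be a symmetric monoidal category with braiding β, and let a : B → A⊗E and b : A'⊗E → B' be morphisms of C. Then the comb family comb[a,b], defined by comb[a,b]_{X,X'}(φ) = (b ⊗ id_{X'}) ∘ (id_{A'} ⊗ β_{X',E}) ∘ (φ ⊗ id_E) ∘ (id_A ⊗ β_{E,X}) ∘ (a ⊗ id_X) for φ : A⊗X → A'⊗X', is a locally-applicable transformation of type C(A⊗-, A'⊗=) → C(B⊗-, B'⊗=); that is, for all f : Y → X⊗Z, g : X'⊗Z → Y' and φ : A⊗X → A'⊗X': comb[a,b]_{Y,Y'}((id_{A'} ⊗ g) ∘ (φ ⊗ id_Z) ∘ (id_A ⊗ f)) = (id_{B'} ⊗ g) ∘ (comb[a,b]_{X,X'}(φ) ⊗ id_Z) ∘ (id_B ⊗ f), suppressing associativity isomorphisms. -/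
noncomputable section
open CategoryTheory MonoidalCategory

universe v u

/-- `(id_{A'} ⊗ g) ∘ (φ ⊗ id_Z) ∘ (id_A ⊗ f)` in a monoidal category, written with
explicit associators. -/
def slideC {C : Type u} [Category.{v} C] [MonoidalCategory C] {A A' X X' Y Y' Z : C}
    (f : Y ⟶ X ⊗ Z) (g : X' ⊗ Z ⟶ Y') (φ : A ⊗ X ⟶ A' ⊗ X') : A ⊗ Y ⟶ A' ⊗ Y' :=
  (𝟙 A ⊗ₘ f) ≫ (α_ A X Z).inv ≫ (φ ⊗ₘ 𝟙 Z) ≫ (α_ A' X' Z).hom ≫ (𝟙 A' ⊗ₘ g)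

/-- The comb family `comb[a,b]` built from `a : B ⟶ A ⊗ E` and `b : A' ⊗ E ⟶ B'`:
`comb[a,b]_{X,X'}(φ) = (b ⊗ id) ∘ (id ⊗ β) ∘ (φ ⊗ id) ∘ (id ⊗ β) ∘ (a ⊗ id)`,
with explicit associators. -/
def combApp {C : Type u} [Category.{v} C] [MonoidalCategory C] [SymmetricCategory C]
    {A A' B B' E : C} (a : B ⟶ A ⊗ E) (b : A' ⊗ E ⟶ B') (X X' : C)
    (φ : A ⊗ X ⟶ A' ⊗ X') : B ⊗ X ⟶ B' ⊗ X' :=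
  (a ⊗ₘ 𝟙 X) ≫ (α_ A E X).hom ≫ (𝟙 A ⊗ₘ (β_ E X).hom) ≫ (α_ A X E).inv ≫
    (φ ⊗ₘ 𝟙 E) ≫ (α_ A' X' E).hom ≫ (𝟙 A' ⊗ₘ (β_ X' E).hom) ≫ (α_ A' E X').inv ≫
      (b ⊗ₘ 𝟙 X')

/-- **Statement 7.** In any symmetric monoidal category, the comb family `comb[a,b]` is a
locally-applicable transformation of type `C(A⊗-, A'⊗=) → C(B⊗-, B'⊗=)`: it satisfies the
sliding equation against all `f : Y ⟶ X ⊗ Z` and `g : X' ⊗ Z ⟶ Y'`. -/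
theorem comb_is_locally_applicable {C : Type u} [Category.{v} C] [MonoidalCategory C]
    [SymmetricCategory C] {A A' B B' E : C} (a : B ⟶ A ⊗ E) (b : A' ⊗ E ⟶ B')
    (X X' Y Y' Z : C) (f : Y ⟶ X ⊗ Z) (g : X' ⊗ Z ⟶ Y') (φ : A ⊗ X ⟶ A' ⊗ X') :
    combApp a b Y Y' (slideC f g φ) = slideC f g (combApp a b X X' φ) := by
  simp only [combApp, slideC, MonoidalCategory.tensorHom_def]
  simp only [MonoidalCategory.comp_whiskerRight, MonoidalCategory.whiskerLeft_comp,
    MonoidalCategory.id_whiskerLeft, MonoidalCategory.whiskerRight_id, Category.assoc,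
    MonoidalCategory.whiskerRight_tensor, MonoidalCategory.whiskerLeft_id,
    MonoidalCategory.id_whiskerRight, Category.id_comp, Category.comp_id,
    Iso.inv_hom_id_assoc, Iso.hom_inv_id_assoc]
  rw [MonoidalCategory.whisker_assoc, MonoidalCategory.whisker_assoc A' g E]
  simp only [Category.assoc, Iso.inv_hom_id_assoc, Iso.hom_inv_id_assoc]
  rw [← MonoidalCategory.whiskerLeft_comp_assoc A (β_ E Y).hom,
    ← BraidedCategory.braiding_naturality_right]
  rw [← MonoidalCategory.whiskerLeft_comp_assoc A' (g ▷ E) (β_ Y' E).hom,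
    BraidedCategory.braiding_naturality_left]
  simp only [BraidedCategory.braiding_tensor_left_hom, BraidedCategory.braiding_tensor_right_hom,
    MonoidalCategory.whiskerLeft_comp, MonoidalCategory.comp_whiskerRight, Category.assoc,
    Iso.inv_hom_id_assoc, Iso.hom_inv_id_assoc]
  calc a ▷ Y ≫ (α_ A E Y).hom ≫ A ◁ E ◁ f ≫ A ◁ (α_ E X Z).inv ≫
        A ◁ (β_ E X).hom ▷ Z ≫ A ◁ (α_ X E Z).hom ≫ A ◁ X ◁ (β_ E Z).hom ≫
        A ◁ (α_ X Z E).inv ≫ (α_ A (X ⊗ Z) E).inv ≫ (α_ A X Z).inv ▷ E ≫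
        φ ▷ Z ▷ E ≫ (α_ A' X' Z).hom ▷ E ≫ (α_ A' (X' ⊗ Z) E).hom ≫
        A' ◁ (α_ X' Z E).hom ≫ A' ◁ X' ◁ (β_ Z E).hom ≫ A' ◁ (α_ X' E Z).inv ≫
        A' ◁ (β_ X' E).hom ▷ Z ≫ A' ◁ (α_ E X' Z).hom ≫ A' ◁ E ◁ g ≫
        (α_ A' E Y').inv ≫ b ▷ Y'
      = a ▷ Y ≫ (A ⊗ E) ◁ f ≫ (α_ A E (X ⊗ Z)).hom ≫ A ◁ (α_ E X Z).inv ≫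
        A ◁ (β_ E X).hom ▷ Z ≫ A ◁ (α_ X E Z).hom ≫ (α_ A X (E ⊗ Z)).inv ≫
        ((A ⊗ X) ◁ (β_ E Z).hom ≫ φ ▷ (Z ⊗ E)) ≫ (A' ⊗ X') ◁ (β_ Z E).hom ≫
        (α_ A' X' (E ⊗ Z)).hom ≫ A' ◁ (α_ X' E Z).inv ≫ A' ◁ (β_ X' E).hom ▷ Z ≫
        A' ◁ (α_ E X' Z).hom ≫ (α_ A' E (X' ⊗ Z)).inv ≫ ((A' ⊗ E) ◁ g ≫ b ▷ Y') := by
          monoidal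
    _ = _ := by
          rw [whisker_exchange φ (β_ E Z).hom, whisker_exchange b g]
          simp only [Category.assoc, ← MonoidalCategory.whiskerLeft_comp_assoc,
            SymmetricCategory.symmetry, MonoidalCategory.whiskerLeft_id, Category.id_comp]
          rw [← whisker_exchange_assoc a f]
          monoidal
end
end

section
/- A subset K ⊆ Stoch(A,A') of column-stochastic matrices is convex if and only if it has control. -/
noncomputable section
open scoped Kronecker
attribute [local instance] Classical.propDecidable
attribute [local instance] FintypeCat.fintype

/-- Entrywise nonnegativity: a morphism of `Mat[ℝ₊]`. -/
def Nonneg {m n : Type} (f : Matrix m n ℝ) : Prop := ∀ i j, 0 ≤ f i j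

/-- A column-stochastic matrix: a morphism of `Stoch`. -/
def IsStoch {m n : Type} [Fintype m] (f : Matrix m n ℝ) : Prop :=
  Nonneg f ∧ ∀ j, ∑ i, f i j = 1

/-- A probability vector. -/
def IsProb {X : Type} [Fintype X] (ρ : X → ℝ) : Prop :=
  (∀ x, 0 ≤ ρ x) ∧ ∑ x, ρ x = 1

/-- Reduction of an extended map by a (generalised) state `ρ` on the input ancilla and a
(generalised) effect `σ` on the output ancilla. -/
def margE {A A' X X' : Type} [Fintype X] [Fintype X'] (Φ : Matrix (A' × X') (A × X) ℝ)
    (ρ : X → ℝ) (σ : X' → ℝ) : Matrix A' A ℝ :=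
  Matrix.of fun a' a => ∑ x' : X', ∑ x : X, σ x' * Φ (a', x') (a, x) * ρ x

/-- Reduction by a state on the input ancilla and the discard on the output ancilla. -/
def marg {A A' X X' : Type} [Fintype X] [Fintype X'] (Φ : Matrix (A' × X') (A × X) ℝ)
    (ρ : X → ℝ) : Matrix A' A ℝ :=
  margE Φ ρ (fun _ => 1)

/-- The dilation extension of a set `K ⊆ Stoch(A,A')` by ancillas `X, X'`. -/
def dExtS {A A' : Type} [Fintype A'] (K : Set (Matrix A' A ℝ))
    (X X' : Type) [Fintype X] [Fintype X'] : Set (Matrix (A' × X') (A × X) ℝ) :=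
  {Φ | IsStoch Φ ∧ ∀ ρ : X → ℝ, IsProb ρ → marg Φ ρ ∈ K}

/-- Closure under convex combinations. -/
def IsConvexSetS {A A' : Type} (K : Set (Matrix A' A ℝ)) : Prop :=
  ∀ φ₀ ∈ K, ∀ φ₁ ∈ K, ∀ p : ℝ, 0 ≤ p → p ≤ 1 → (p • φ₀ + (1 - p) • φ₁) ∈ K

/-- A normal set: one containing every discard-prepare map. -/
def IsNormalSetS {A A' : Type} [Fintype A'] (K : Set (Matrix A' A ℝ)) : Prop :=
  ∀ ρ : A' → ℝ, IsProb ρ → (Matrix.of fun a' (_ : A) => ρ a') ∈ K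

/-- `(id_{A'} ⊗ g) · (Φ ⊗ id_Z) · (id_A ⊗ f)`, suppressing associativity isomorphisms. -/
def slideS {A A' X X' Y Y' Z : Type} [Fintype A] [Fintype A'] [Fintype X] [Fintype X']
    [Fintype Y] [Fintype Y'] [Fintype Z]
    (f : Matrix (X × Z) Y ℝ) (g : Matrix Y' (X' × Z) ℝ)
    (Φ : Matrix (A' × X') (A × X) ℝ) : Matrix (A' × Y') (A × Y) ℝ :=
  ((1 : Matrix A' A' ℝ) ⊗ₖ g) *
    (Matrix.reindex (Equiv.prodAssoc A' X' Z) (Equiv.prodAssoc A X Z)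
      (Φ ⊗ₖ (1 : Matrix Z Z ℝ))) *
    ((1 : Matrix A A ℝ) ⊗ₖ f)

/-- A locally-applicable transformation of type `K → M` on `Stoch`. -/
structure LocAppS {A A' B B' : Type} [Fintype A] [Fintype A'] [Fintype B] [Fintype B']
    (K : Set (Matrix A' A ℝ)) (M : Set (Matrix B' B ℝ)) where
  app : ∀ (X X' : FintypeCat.{0}), ↥(dExtS K X X') → ↥(dExtS M X X')
  natural : ∀ (X X' Y Y' Z : FintypeCat.{0})
      (f : Matrix (X × Z) Y ℝ) (g : Matrix Y' (X' × Z) ℝ),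
      IsStoch f → IsStoch g →
      ∀ (Φ : ↥(dExtS K X X')) (h : slideS f g Φ.1 ∈ dExtS K Y Y'),
        (app Y Y' ⟨slideS f g Φ.1, h⟩).1 = slideS f g (app X X' Φ).1

/-- Reduction of a doubly-extended map by a state on the control ancilla and the discard
on its output. -/
def margCtrl {A A' X X' Y Y' : Type} [Fintype Y] [Fintype Y']
    (Φ : Matrix (A' × (X' × Y')) (A × (X × Y)) ℝ) (ρ : Y → ℝ) :
    Matrix (A' × X') (A × X) ℝ :=
  Matrix.of fun p q => ∑ y' : Y', ∑ y : Y, Φ (p.1, (p.2, y')) (q.1, (q.2, y)) * ρ y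

/-- A set `K ⊆ Stoch(A,A')` has control if any two members of a common dilation extension
arise as reductions of a single member by a pair of probability vectors. -/
def HasControlS {A A' : Type} [Fintype A] [Fintype A'] (K : Set (Matrix A' A ℝ)) : Prop :=
  ∀ (X X' : FintypeCat.{0}), ∀ φ₀ ∈ dExtS K X X', ∀ φ₁ ∈ dExtS K X X',
    ∃ (Y Y' : FintypeCat.{0}) (Φ : Matrix (A' × (X' × Y')) (A × (X × Y)) ℝ)
      (ρ₀ ρ₁ : Y → ℝ),
      Φ ∈ dExtS K (X × Y) (X' × Y') ∧ IsProb ρ₀ ∧ IsProb ρ₁ ∧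
      margCtrl Φ ρ₀ = φ₀ ∧ margCtrl Φ ρ₁ = φ₁

/-- The action of a `Mat[ℝ₊]`-supermap `S` (acting on vectorizations) on an extended
morphism, by tensor extension with the identity via the compact structure. -/
def supActS {A A' B B' X X' : Type} [Fintype A] [Fintype A']
    (S : Matrix (B × B') (A × A') ℝ) (Φ : Matrix (A' × X') (A × X) ℝ) :
    Matrix (B' × X') (B × X) ℝ :=
  Matrix.of fun p q => ∑ a : A, ∑ a' : A', S (q.1, p.1) (a, a') * Φ (a', p.2) (a, q.2)

/-- A `Mat[ℝ₊]`-supermap of type `K → M` on `Stoch`. -/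
def IsSupermapS {A A' B B' : Type} [Fintype A] [Fintype A'] [Fintype B']
    (K : Set (Matrix A' A ℝ)) (M : Set (Matrix B' B ℝ))
    (S : Matrix (B × B') (A × A') ℝ) : Prop :=
  Nonneg S ∧ ∀ (X X' : FintypeCat.{0}), ∀ Φ ∈ dExtS K X X', supActS S Φ ∈ dExtS M X X'

abbrev fcBoolInst : Fintype (FintypeCat.of Bool) := FintypeCat.fintype

abbrev fcPUnitInst : Fintype (FintypeCat.of PUnit.{1}) := FintypeCat.fintype

attribute [local instance 2000] fcBoolInst fcPUnitInst

lemma sumBool (f : ↥(FintypeCat.of Bool) → ℝ) : ∑ y, f y = f true + f false := by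
  convert Fintype.sum_bool f

lemma sumPUnit (f : ↥(FintypeCat.of PUnit) → ℝ) : ∑ y, f y = f PUnit.unit := by
  convert Fintype.sum_unique f

lemma bNeTF : (true : ↥(FintypeCat.of Bool)) ≠ false := fun h => Bool.noConfusion h

lemma bNeFT : (false : ↥(FintypeCat.of Bool)) ≠ true := fun h => Bool.noConfusion h

/-- A subset `K ⊆ Stoch(A,A')` of column-stochastic matrices is convex
if and only if it has control. -/
theorem stoch_convex_iff_control (A A' : FintypeCat.{0})
    (K : Set (Matrix A' A ℝ)) (hK : ∀ φ ∈ K, IsStoch φ) :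
    IsConvexSetS K ↔ HasControlS K := by
  classical
  constructor
  · -- convex → control
    intro hconv X X' φ₀ hφ₀ φ₁ hφ₁
    refine ⟨FintypeCat.of Bool, FintypeCat.of Bool,
      Matrix.of (fun p q =>
        (if p.2.2 = q.2.2 then (1:ℝ) else 0) *
          (if q.2.2 = true then φ₁ else φ₀) (p.1, p.2.1) (q.1, q.2.1)),
      (fun y => if y = true then 0 else 1), (fun y => if y = true then 1 else 0),
      ?_, ?_, ?_, ?_, ?_⟩
    · -- membership in dExtS
      refine ⟨⟨?_, ?_⟩, ?_⟩
      · rintro ⟨a', x', y'⟩ ⟨a, x, y⟩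
        have h0 := hφ₀.1.1 (a', x') (a, x)
        have h1 := hφ₁.1.1 (a', x') (a, x)
        dsimp only [Matrix.of_apply]
        refine mul_nonneg ?_ ?_
        · split <;> norm_num
        · split <;> assumption
      · rintro ⟨a, x, y⟩
        have h0 := hφ₀.1.2 (a, x); rw [Fintype.sum_prod_type] at h0
        have h1 := hφ₁.1.2 (a, x); rw [Fintype.sum_prod_type] at h1
        rw [Fintype.sum_prod_type]
        simp only [Fintype.sum_prod_type, sumBool, Matrix.of_apply]
        by_cases h2 : y = true
        · simp [h2, bNeTF, bNeFT, Finset.sum_add_distrib, h1]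
        · have h2' : y = false := by
            revert h2; show ¬ (y : Bool) = true → (y : Bool) = false; intro h
            exact Bool.eq_false_iff.2 h
          simp [h2', bNeTF, bNeFT, Finset.sum_add_distrib, h0]
      · intro ρ hρ
        set q1 : ℝ := ∑ x : X, ρ (x, true) with hq1
        set q0 : ℝ := ∑ x : X, ρ (x, false) with hq0
        have hq1nn : 0 ≤ q1 := Finset.sum_nonneg fun x _ => hρ.1 _
        have hq0nn : 0 ≤ q0 := Finset.sum_nonneg fun x _ => hρ.1 _
        have hqsum : q1 + q0 = 1 := by
          have h := hρ.2
          rw [Fintype.sum_prod_type] at h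
          simp only [sumBool] at h
          rw [← h, hq1, hq0, ← Finset.sum_add_distrib]
          exact Finset.sum_congr rfl fun x _ => by rw [sumBool]
        have hxne : Nonempty X := by
          by_contra h
          rw [not_nonempty_iff] at h
          have h2 : ∑ z : X × ↥(FintypeCat.of Bool), ρ z = 0 := by
            rw [Fintype.sum_prod_type]
            simp
          rw [hρ.2] at h2; norm_num at h2
        obtain ⟨x₀⟩ := hxne
        set ρt : X → ℝ := fun x => if q1 = 0 then (if x = x₀ then 1 else 0) else ρ (x, true) / q1 with hρt
        set ρf : X → ℝ := fun x => if q0 = 0 then (if x = x₀ then 1 else 0) else ρ (x, false) / q0 with hρf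
        have hρtprob : IsProb ρt := by
          constructor
          · intro x
            simp only [hρt]
            by_cases h : q1 = 0
            · rw [if_pos h]; split <;> norm_num
            · rw [if_neg h]; exact div_nonneg (hρ.1 _) hq1nn
          · by_cases h : q1 = 0
            · simp only [hρt, if_pos h]
              simp
            · simp only [hρt, if_neg h]
              rw [← Finset.sum_div, ← hq1, div_self h]
        have hρfprob : IsProb ρf := by
          constructor
          · intro x
            simp only [hρf]
            by_cases h : q0 = 0
            · rw [if_pos h]; split <;> norm_num
            · rw [if_neg h]; exact div_nonneg (hρ.1 _) hq0nn
          · by_cases h : q0 = 0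
            · simp only [hρf, if_pos h]
              simp
            · simp only [hρf, if_neg h]
              rw [← Finset.sum_div, ← hq0, div_self h]
        have hmult : ∀ x : X, q1 * ρt x = ρ (x, true) := by
          intro x
          by_cases h : q1 = 0
          · have hz : ρ (x, true) = 0 := by
              have hzz := (Finset.sum_eq_zero_iff_of_nonneg
                (fun x (_ : x ∈ Finset.univ) => hρ.1 ((x, true) : X × ↥(FintypeCat.of Bool)))).1
                (by rw [← hq1]; exact h)
              exact hzz x (Finset.mem_univ x)
            rw [h, hz, zero_mul]
          · simp only [hρt, if_neg h]
            field_simp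
        have hmulf : ∀ x : X, q0 * ρf x = ρ (x, false) := by
          intro x
          by_cases h : q0 = 0
          · have hz : ρ (x, false) = 0 := by
              have hzz := (Finset.sum_eq_zero_iff_of_nonneg
                (fun x (_ : x ∈ Finset.univ) => hρ.1 ((x, false) : X × ↥(FintypeCat.of Bool)))).1
                (by rw [← hq0]; exact h)
              exact hzz x (Finset.mem_univ x)
            rw [h, hz, zero_mul]
          · simp only [hρf, if_neg h]
            field_simp
        have hm1 : marg φ₁ ρt ∈ K := hφ₁.2 ρt hρtprob
        have hm0 : marg φ₀ ρf ∈ K := hφ₀.2 ρf hρfprob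
        have key : marg (Matrix.of (fun (p : A' × (X' × ↥(FintypeCat.of Bool))) (q : A × (X × ↥(FintypeCat.of Bool))) =>
              (if p.2.2 = q.2.2 then (1:ℝ) else 0) *
                (if q.2.2 = true then φ₁ else φ₀) (p.1, p.2.1) (q.1, q.2.1))) ρ
            = q1 • marg φ₁ ρt + (1 - q1) • marg φ₀ ρf := by
          have h1q : (1 : ℝ) - q1 = q0 := by linarith
          ext a' a
          have L : marg (Matrix.of (fun (p : A' × (X' × ↥(FintypeCat.of Bool))) (q : A × (X × ↥(FintypeCat.of Bool))) =>
                (if p.2.2 = q.2.2 then (1:ℝ) else 0) *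
                  (if q.2.2 = true then φ₁ else φ₀) (p.1, p.2.1) (q.1, q.2.1))) ρ a' a
              = ∑ x' : X', ∑ x : X,
                  (φ₁ (a', x') (a, x) * ρ (x, true) + φ₀ (a', x') (a, x) * ρ (x, false)) := by
            simp only [marg, margE, Matrix.of_apply, one_mul]
            rw [Fintype.sum_prod_type]
            refine Finset.sum_congr rfl fun x' _ => ?_
            rw [sumBool]
            rw [Fintype.sum_prod_type, Fintype.sum_prod_type]
            rw [← Finset.sum_add_distrib]
            refine Finset.sum_congr rfl fun x _ => ?_
            rw [sumBool, sumBool]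
            simp [bNeTF, bNeFT]
          rw [show (q1 • marg φ₁ ρt + (1 - q1) • marg φ₀ ρf) a' a
              = q1 * marg φ₁ ρt a' a + q0 * marg φ₀ ρf a' a by
            rw [h1q]; simp [Matrix.add_apply, Matrix.smul_apply, smul_eq_mul]]
          rw [L]
          simp only [marg, margE, Matrix.of_apply, one_mul]
          rw [Finset.mul_sum, Finset.mul_sum, ← Finset.sum_add_distrib]
          refine Finset.sum_congr rfl fun x' _ => ?_
          rw [Finset.mul_sum, Finset.mul_sum, ← Finset.sum_add_distrib]
          refine Finset.sum_congr rfl fun x _ => ?_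
          rw [← hmult x, ← hmulf x]
          ring
        rw [key]
        exact hconv _ hm1 _ hm0 q1 hq1nn (by linarith)
    · refine ⟨fun x => ?_, ?_⟩
      · dsimp only; split <;> norm_num
      · rw [sumBool]; simp [bNeTF, bNeFT]
    · refine ⟨fun x => ?_, ?_⟩
      · dsimp only; split <;> norm_num
      · rw [sumBool]; simp [bNeTF, bNeFT]
    · ext ⟨a', x'⟩ ⟨a, x⟩
      simp only [margCtrl, Matrix.of_apply, sumBool]
      simp [bNeTF, bNeFT]
      rw [sumBool, sumBool, sumBool]; simp [bNeTF, bNeFT]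
    · ext ⟨a', x'⟩ ⟨a, x⟩
      simp only [margCtrl, Matrix.of_apply, sumBool]
      simp [bNeTF, bNeFT]
  · -- control → convex
    intro hctrl φ₀ hφ₀ φ₁ hφ₁ p hp0 hp1
    have hmem : ∀ φ ∈ K, (Matrix.of fun (q : A' × ↥(FintypeCat.of PUnit)) (r : A × ↥(FintypeCat.of PUnit)) => φ q.1 r.1)
        ∈ dExtS K (FintypeCat.of PUnit) (FintypeCat.of PUnit) := by
      intro φ hφ
      obtain ⟨hnn, hsum⟩ := hK φ hφ
      refine ⟨⟨fun i j => hnn i.1 j.1, ?_⟩, ?_⟩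
      · intro j
        rw [Fintype.sum_prod_type]
        simp only [sumPUnit, Matrix.of_apply]
        rw [← hsum j.1]; exact Finset.sum_congr rfl fun x _ => sumPUnit _
      · intro ρ hρ
        have h1 : ρ PUnit.unit = 1 := by
          have h := hρ.2; rwa [sumPUnit] at h
        have heq : marg (Matrix.of fun (q : A' × ↥(FintypeCat.of PUnit)) (r : A × ↥(FintypeCat.of PUnit)) => φ q.1 r.1) ρ = φ := by
          ext a' a
          simp only [marg, margE, Matrix.of_apply, sumPUnit, one_mul, h1, mul_one]
          rw [sumPUnit, sumPUnit]
        rw [heq]; exact hφ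
    obtain ⟨Y, Y', Φ, ρ₀, ρ₁, hΦ, hρ₀, hρ₁, h0, h1⟩ :=
      hctrl (FintypeCat.of PUnit) (FintypeCat.of PUnit) _ (hmem φ₀ hφ₀) _ (hmem φ₁ hφ₁)
    set ρ : ↥(FintypeCat.of PUnit) × Y → ℝ := fun z => p * ρ₀ z.2 + (1 - p) * ρ₁ z.2 with hρdef
    have hρprob : IsProb ρ := by
      constructor
      · intro z
        have h0' := hρ₀.1 z.2
        have h1' := hρ₁.1 z.2
        have : 0 ≤ p * ρ₀ z.2 := mul_nonneg hp0 h0'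
        have : 0 ≤ (1 - p) * ρ₁ z.2 := mul_nonneg (by linarith) h1'
        simp only [hρdef]
        linarith
      · rw [Fintype.sum_prod_type]
        simp only [sumPUnit, hρdef]
        rw [Finset.sum_add_distrib, ← Finset.mul_sum, ← Finset.mul_sum, hρ₀.2, hρ₁.2]
        ring
        exact sumPUnit _
    have hKm := hΦ.2 ρ hρprob
    have e0 : ∀ (a' : A') (a : A), (∑ y' : Y', ∑ y : Y, Φ (a', (PUnit.unit, y')) (a, (PUnit.unit, y)) * ρ₀ y) = φ₀ a' a := by
      intro a' a
      have h := congrFun (congrFun h0 (a', PUnit.unit)) (a, PUnit.unit)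
      simpa [margCtrl] using h
    have e1 : ∀ (a' : A') (a : A), (∑ y' : Y', ∑ y : Y, Φ (a', (PUnit.unit, y')) (a, (PUnit.unit, y)) * ρ₁ y) = φ₁ a' a := by
      intro a' a
      have h := congrFun (congrFun h1 (a', PUnit.unit)) (a, PUnit.unit)
      simpa [margCtrl] using h
    have heq : marg Φ ρ = p • φ₀ + (1 - p) • φ₁ := by
      ext a' a
      have step : marg Φ ρ a' a
          = p * (∑ y' : Y', ∑ y : Y, Φ (a', (PUnit.unit, y')) (a, (PUnit.unit, y)) * ρ₀ y)
          + (1 - p) * (∑ y' : Y', ∑ y : Y, Φ (a', (PUnit.unit, y')) (a, (PUnit.unit, y)) * ρ₁ y) := by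
        simp only [marg, margE, Matrix.of_apply, one_mul]
        rw [Fintype.sum_prod_type, sumPUnit]
        rw [Finset.mul_sum, Finset.mul_sum, ← Finset.sum_add_distrib]
        refine Finset.sum_congr rfl fun y' _ => ?_
        rw [Fintype.sum_prod_type, sumPUnit]
        rw [Finset.mul_sum, Finset.mul_sum, ← Finset.sum_add_distrib]
        refine Finset.sum_congr rfl fun y _ => ?_
        simp only [hρdef]
        ring
      rw [step, e0, e1]
      simp [Matrix.add_apply, Matrix.smul_apply, smul_eq_mul]
    rw [← heq]
    exact hKm
end
end

section
/- Let K ⊆ Stoch(A,A') and M ⊆ Stoch(B,B') be convex. Then every locally-applicable transformation S : K → M on Stoch is convex linear: for every X, X', every φ₀, φ₁ ∈ dExt_{X,X'}(K) and every p ∈ [0,1], S_{X,X'}(p·φ₀ + (1-p)·φ₁) = p·S_{X,X'}(φ₀) + (1-p)·S_{X,X'}(φ₁). -/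
noncomputable section
open scoped Kronecker
attribute [local instance] Classical.propDecidable
attribute [local instance] FintypeCat.fintype

def fPi {X : Type} (π : Bool → ℝ) : Matrix ((X × Bool) × PUnit) X ℝ :=
  Matrix.of fun p x => if p.1.1 = x then π p.1.2 else 0

def gDis {X' : Type} : Matrix X' ((X' × Bool) × PUnit) ℝ :=
  Matrix.of fun x' q => if x' = q.1.1 then 1 else 0

def ctrlM {A A' X X' : Type} (Φ₀ Φ₁ : Matrix (A' × X') (A × X) ℝ) :
    Matrix (A' × (X' × Bool)) (A × (X × Bool)) ℝ :=
  Matrix.of fun p q =>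
    if p.2.2 = q.2.2 then (if q.2.2 then Φ₁ else Φ₀) (p.1, p.2.1) (q.1, q.2.1) else 0

lemma slide_apply {C C' X X' : Type} [Fintype C] [Fintype C'] [Fintype X] [Fintype X']
    (π : Bool → ℝ) (Ψ : Matrix (C' × (X' × Bool)) (C × (X × Bool)) ℝ)
    (c' : C') (x' : X') (c : C) (x : X) :
    slideS (fPi π) gDis Ψ (c', x') (c, x) =
      ∑ b' : Bool, ∑ b : Bool, π b * Ψ (c', (x', b')) (c, (x, b)) := by
  simp only [slideS, Matrix.mul_apply, Matrix.kroneckerMap_apply, Matrix.reindex_apply,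
    Matrix.submatrix_apply, Equiv.prodAssoc_symm_apply, Matrix.one_apply, fPi, gDis,
    Matrix.of_apply, Fintype.sum_prod_type]
  simp only [ite_mul, mul_ite, one_mul, mul_one, zero_mul, mul_zero,
    Finset.sum_ite_eq, Finset.sum_ite_eq', Finset.mem_univ, if_true]
  simp [Finset.mul_sum, Finset.sum_mul, mul_comm]
  ring

lemma fPi_stoch {X : Type} [Fintype X] (π : Bool → ℝ) (hπ : IsProb π) :
    IsStoch (fPi (X := X) π) := by
  constructor
  · intro p x
    simp only [fPi, Matrix.of_apply]
    split
    · exact hπ.1 _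
    · exact le_refl 0
  · intro x
    have := hπ.2
    simp [fPi, Fintype.sum_prod_type, Finset.sum_ite_eq', Fintype.sum_bool] at this ⊢
    linarith

lemma gDis_stoch {X' : Type} [Fintype X'] : IsStoch (gDis (X' := X')) := by
  constructor
  · intro x' q
    simp only [gDis, Matrix.of_apply]
    split <;> norm_num
  · intro q
    simp [gDis, Finset.sum_ite_eq']

lemma ctrl_slide {A A' X X' : Type} [Fintype A] [Fintype A'] [Fintype X] [Fintype X']
    (π : Bool → ℝ) (Φ₀ Φ₁ : Matrix (A' × X') (A × X) ℝ) :
    slideS (fPi π) gDis (ctrlM Φ₀ Φ₁) = π false • Φ₀ + π true • Φ₁ := by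
  ext ⟨a', x'⟩ ⟨a, x⟩
  rw [slide_apply]
  simp [ctrlM, Fintype.sum_bool]
  ring

lemma slide_lin {C C' X X' : Type} [Fintype C] [Fintype C'] [Fintype X] [Fintype X']
    (Ψ : Matrix (C' × (X' × Bool)) (C × (X × Bool)) ℝ) (p : ℝ) :
    slideS (fPi (fun b => if b then 1 - p else p)) gDis Ψ =
      p • slideS (fPi (fun b => if b then 0 else 1)) gDis Ψ +
        (1 - p) • slideS (fPi (fun b => if b then 1 else 0)) gDis Ψ := by
  ext ⟨c', x'⟩ ⟨c, x⟩
  simp only [Matrix.add_apply, Matrix.smul_apply, slide_apply, Fintype.sum_bool, smul_eq_mul]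
  norm_num
  ring

lemma marg_smul {A A' X X' : Type} [Fintype X] [Fintype X']
    (Φ : Matrix (A' × X') (A × X) ℝ) (q : ℝ) (ρ : X → ℝ) :
    marg Φ (fun x => q * ρ x) = q • marg Φ ρ := by
  ext a' a
  simp [marg, margE, Finset.mul_sum]
  congr 1; funext x'; congr 1; funext x; ring

lemma ctrl_mem {A A' X X' : Type} [Fintype A] [Fintype A'] [Fintype X] [Fintype X']
    (K : Set (Matrix A' A ℝ)) (hKconv : IsConvexSetS K)
    (Φ₀ Φ₁ : Matrix (A' × X') (A × X) ℝ)
    (hΦ₀ : Φ₀ ∈ dExtS K X X') (hΦ₁ : Φ₁ ∈ dExtS K X X') :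
    ctrlM Φ₀ Φ₁ ∈ dExtS K (X × Bool) (X' × Bool) := by
  refine ⟨⟨?_, ?_⟩, ?_⟩
  · rintro ⟨a', x', b'⟩ ⟨a, x, b⟩
    simp only [ctrlM, Matrix.of_apply]
    split
    · cases b
      · exact hΦ₀.1.1 _ _
      · exact hΦ₁.1.1 _ _
    · exact le_refl 0
  · rintro ⟨a, x, b⟩
    have h0 := hΦ₀.1.2 (a, x)
    have h1 := hΦ₁.1.2 (a, x)
    rw [Fintype.sum_prod_type] at h0 h1
    cases b <;>
      simpa [ctrlM, Fintype.sum_prod_type, Fintype.sum_bool] using ‹_›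
  · intro ρ hρ
    -- X is nonempty
    rcases isEmpty_or_nonempty X with hE | hne
    · exact absurd hρ.2 (by simp)
    have hcard : (0 : ℝ) < Fintype.card X := by
      exact_mod_cast Fintype.card_pos
    -- weights
    set q₀ : ℝ := ∑ x, ρ (x, false) with hq₀
    set q₁ : ℝ := ∑ x, ρ (x, true) with hq₁
    have hq0n : 0 ≤ q₀ := Finset.sum_nonneg fun x _ => hρ.1 _
    have hq1n : 0 ≤ q₁ := Finset.sum_nonneg fun x _ => hρ.1 _
    have hsum : q₀ + q₁ = 1 := by
      have := hρ.2
      rw [Fintype.sum_prod_type] at this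
      simp only [Fintype.sum_bool] at this
      rw [Finset.sum_add_distrib] at this
      linarith
    -- normalized conditionals
    have mk : ∀ b : Bool, ∃ ρb : X → ℝ, IsProb ρb ∧
        (fun x => ρ (x, b)) = fun x => (∑ y, ρ (y, b)) * ρb x := by
      intro b
      by_cases hz : (∑ y, ρ (y, b)) = 0
      · refine ⟨fun _ => (Fintype.card X : ℝ)⁻¹, ⟨fun _ => by positivity, ?_⟩, ?_⟩
        · rw [Finset.sum_const, Finset.card_univ, nsmul_eq_mul]
          field_simp
        · funext x
          have : ρ (x, b) = 0 := by
            have := (Finset.sum_eq_zero_iff_of_nonneg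
              (fun y _ => hρ.1 (y, b))).mp hz x (Finset.mem_univ x)
            exact this
          simp [this, hz]
      · refine ⟨fun x => ρ (x, b) / (∑ y, ρ (y, b)), ⟨fun x => ?_, ?_⟩, ?_⟩
        · exact div_nonneg (hρ.1 _) (Finset.sum_nonneg fun y _ => hρ.1 _)
        · rw [← Finset.sum_div]
          field_simp
        · funext x
          field_simp
    obtain ⟨ρ₀, hρ₀, hd₀⟩ := mk false
    obtain ⟨ρ₁, hρ₁, hd₁⟩ := mk true
    have hdecomp : marg (ctrlM Φ₀ Φ₁) ρ = q₀ • marg Φ₀ ρ₀ + q₁ • marg Φ₁ ρ₁ := by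
      rw [← marg_smul, ← marg_smul, ← hd₀, ← hd₁]
      ext a' a
      simp [marg, margE, ctrlM, Fintype.sum_prod_type, Fintype.sum_bool,
        Finset.sum_add_distrib]
      ring
    rw [hdecomp, show q₁ = 1 - q₀ by linarith]
    exact hKconv _ (hΦ₀.2 ρ₀ hρ₀) _ (hΦ₁.2 ρ₁ hρ₁) q₀ hq0n (by linarith)

/-- **Statement 13.** Every locally-applicable transformation between convex sets of
column-stochastic matrices is convex linear. -/
theorem stoch_locApp_convex_linear (A A' B B' : FintypeCat.{0})
    (K : Set (Matrix A' A ℝ)) (M : Set (Matrix B' B ℝ))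
    (hK : ∀ φ ∈ K, IsStoch φ) (hM : ∀ φ ∈ M, IsStoch φ)
    (hKconv : IsConvexSetS K) (hMconv : IsConvexSetS M)
    (S : LocAppS K M) (X X' : FintypeCat.{0})
    (Φ₀ Φ₁ : ↥(dExtS K X X')) (p : ℝ) (hp0 : 0 ≤ p) (hp1 : p ≤ 1)
    (h : p • Φ₀.1 + (1 - p) • Φ₁.1 ∈ dExtS K X X') :
    (S.app X X' ⟨p • Φ₀.1 + (1 - p) • Φ₁.1, h⟩).1 =
      p • (S.app X X' Φ₀).1 + (1 - p) • (S.app X X' Φ₁).1 := by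
  classical
  set Xb : FintypeCat.{0} := FintypeCat.of (X × Bool) with hXb
  set X'b : FintypeCat.{0} := FintypeCat.of (X' × Bool) with hX'b
  set Z : FintypeCat.{0} := FintypeCat.of PUnit with hZ
  have hctrl : ctrlM Φ₀.1 Φ₁.1 ∈ @dExtS _ _ _ K Xb X'b FintypeCat.fintype FintypeCat.fintype := by
    convert ctrl_mem K hKconv Φ₀.1 Φ₁.1 Φ₀.2 Φ₁.2
  set Ψ : Matrix (B' × (X' × Bool)) (B × (X × Bool)) ℝ :=
    (S.app Xb X'b ⟨ctrlM Φ₀.1 Φ₁.1, hctrl⟩).1 with hΨ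
  -- the three probability vectors on Bool
  have hnat : ∀ π : Bool → ℝ, IsProb π →
      ∀ hm : slideS (fPi π) gDis (ctrlM Φ₀.1 Φ₁.1) ∈ dExtS K X X',
      (S.app X X' ⟨slideS (fPi π) gDis (ctrlM Φ₀.1 Φ₁.1), hm⟩).1 =
        slideS (fPi π) gDis Ψ := by
    intro π hπ hm
    convert S.natural Xb X'b X X' Z (fPi π) gDis (by convert fPi_stoch (X := X) π hπ) (by convert gDis_stoch)
      ⟨ctrlM Φ₀.1 Φ₁.1, hctrl⟩ (by convert hm)
  -- mixture
  have ep : slideS (fPi (fun b => if b then 1 - p else p)) gDis (ctrlM Φ₀.1 Φ₁.1)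
      = p • Φ₀.1 + (1 - p) • Φ₁.1 := by
    rw [ctrl_slide]; norm_num
  have e0 : slideS (fPi (fun b => if b then 0 else 1)) gDis (ctrlM Φ₀.1 Φ₁.1) = Φ₀.1 := by
    rw [ctrl_slide]; norm_num
  have e1 : slideS (fPi (fun b => if b then 1 else 0)) gDis (ctrlM Φ₀.1 Φ₁.1) = Φ₁.1 := by
    rw [ctrl_slide]; norm_num
  have hmp : slideS (fPi (fun b => if b then 1 - p else p)) gDis (ctrlM Φ₀.1 Φ₁.1)
      ∈ dExtS K X X' := by rw [ep]; exact h
  have hm0 : slideS (fPi (fun b => if b then 0 else 1)) gDis (ctrlM Φ₀.1 Φ₁.1)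
      ∈ dExtS K X X' := by rw [e0]; exact Φ₀.2
  have hm1 : slideS (fPi (fun b => if b then 1 else 0)) gDis (ctrlM Φ₀.1 Φ₁.1)
      ∈ dExtS K X X' := by rw [e1]; exact Φ₁.2
  have keyp : (S.app X X' ⟨p • Φ₀.1 + (1 - p) • Φ₁.1, h⟩).1 =
      slideS (fPi (fun b => if b then 1 - p else p)) gDis Ψ := by
    rw [show (⟨p • Φ₀.1 + (1 - p) • Φ₁.1, h⟩ : ↥(dExtS K X X')) = ⟨_, hmp⟩ from
      Subtype.ext ep.symm]
    exact hnat _ ⟨fun b => by cases b <;> simp <;> linarith,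
      by simp [Fintype.sum_bool]⟩ hmp
  have key0 : (S.app X X' Φ₀).1 =
      slideS (fPi (fun b => if b then 0 else 1)) gDis Ψ := by
    rw [show Φ₀ = ⟨_, hm0⟩ from Subtype.ext e0.symm]
    exact hnat _ ⟨fun b => by cases b <;> norm_num, by simp [Fintype.sum_bool]⟩ hm0
  have key1 : (S.app X X' Φ₁).1 =
      slideS (fPi (fun b => if b then 1 else 0)) gDis Ψ := by
    rw [show Φ₁ = ⟨_, hm1⟩ from Subtype.ext e1.symm]
    exact hnat _ ⟨fun b => by cases b <;> norm_num, by simp [Fintype.sum_bool]⟩ hm1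
  rw [keyp, key0, key1]
  exact slide_lin Ψ p
end
end

section
/- Let K ⊆ Stoch(A,A') and M ⊆ Stoch(B,B') be convex. Then every locally-applicable transformation S : K → M on Stoch extends to a well-defined function S_{Mat[ℝ₊]} : K_{Mat[ℝ₊]} → M_{Mat[ℝ₊]} via S_{Mat[ℝ₊]}((id_{A'} ⊗ σ) · Φ · (id_A ⊗ ρ)) := (id_{B'} ⊗ σ) · S_{X,X'}(Φ) · (id_B ⊗ ρ); that is, whenever two such representations yield the same element of K_{Mat[ℝ₊]}, the corresponding images agree. -/
noncomputable section
open scoped Kronecker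
attribute [local instance] Classical.propDecidable
attribute [local instance] FintypeCat.fintype

lemma slideS_apply {A A' X X' Y Y' Z : Type} [Fintype A] [Fintype A'] [Fintype X] [Fintype X']
    [Fintype Y] [Fintype Y'] [Fintype Z]
    (f : Matrix (X × Z) Y ℝ) (g : Matrix Y' (X' × Z) ℝ) (Φ : Matrix (A' × X') (A × X) ℝ)
    (a' : A') (y' : Y') (a : A) (y : Y) :
    slideS f g Φ (a', y') (a, y) =
      ∑ x' : X', ∑ z : Z, ∑ x : X, g y' (x', z) * Φ (a', x') (a, x) * f (x, z) y := by
  simp only [slideS, Matrix.mul_apply, Matrix.kroneckerMap_apply, Matrix.reindex_apply,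
    Matrix.submatrix_apply, Matrix.one_apply, Fintype.sum_prod_type, Equiv.prodAssoc_symm_apply,
    ite_mul, mul_ite, mul_zero, zero_mul, mul_one, one_mul]
  simp only [Finset.sum_ite_eq, Finset.sum_ite_eq', Finset.sum_ite_irrel, Finset.sum_const_zero,
    Finset.mem_univ, if_true, Finset.sum_mul]
  rw [show (∑ x : X, ∑ z : Z, ∑ x' : X', g y' (x', z) * Φ (a', x') (a, x) * f (x, z) y)
      = ∑ x : X, ∑ x' : X', ∑ z : Z, g y' (x', z) * Φ (a', x') (a, x) * f (x, z) y from
      Finset.sum_congr rfl fun x _ => Finset.sum_comm, Finset.sum_comm]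
  exact Finset.sum_congr rfl fun x' _ => Finset.sum_comm
lemma isStoch_one {n : Type} [Fintype n] : IsStoch (1 : Matrix n n ℝ) := by
  constructor
  · intro i j; by_cases h : i = j <;> simp [Matrix.one_apply, h]
  · intro j; simp [Matrix.one_apply, Finset.sum_ite_eq]

lemma IsStoch.matmul {m n p : Type} [Fintype m] [Fintype n] {f : Matrix m n ℝ} {g : Matrix n p ℝ}
    (hf : IsStoch f) (hg : IsStoch g) : IsStoch (f * g) := by
  constructor
  · intro i j; rw [Matrix.mul_apply]
    exact Finset.sum_nonneg fun k _ => mul_nonneg (hf.1 _ _) (hg.1 _ _)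
  · intro j
    simp only [Matrix.mul_apply]
    rw [Finset.sum_comm]
    simp only [← Finset.sum_mul, hf.2, one_mul]
    exact hg.2 j

lemma IsStoch.kron {m n m' n' : Type} [Fintype m] [Fintype m'] {f : Matrix m n ℝ}
    {g : Matrix m' n' ℝ} (hf : IsStoch f) (hg : IsStoch g) : IsStoch (f ⊗ₖ g) := by
  constructor
  · rintro ⟨i, i'⟩ ⟨j, j'⟩; exact mul_nonneg (hf.1 _ _) (hg.1 _ _)
  · rintro ⟨j, j'⟩
    rw [Fintype.sum_prod_type]
    simp only [Matrix.kroneckerMap_apply, ← Finset.mul_sum, hg.2, mul_one]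
    exact hf.2 j

lemma IsStoch.reindexS {m n m' n' : Type} [Fintype m] [Fintype m'] {f : Matrix m n ℝ}
    (hf : IsStoch f) (e₁ : m ≃ m') (e₂ : n ≃ n') : IsStoch (Matrix.reindex e₁ e₂ f) := by
  constructor
  · intro i j; exact hf.1 _ _
  · intro j
    rw [show (∑ i : m', Matrix.reindex e₁ e₂ f i j) = ∑ i : m, f i (e₂.symm j) from
      Fintype.sum_equiv e₁.symm _ _ fun i => rfl]
    exact hf.2 _

lemma IsStoch.slideS' {A A' X X' Y Y' Z : Type} [Fintype A] [Fintype A'] [Fintype X] [Fintype X']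
    [Fintype Y] [Fintype Y'] [Fintype Z]
    {f : Matrix (X × Z) Y ℝ} {g : Matrix Y' (X' × Z) ℝ} {Φ : Matrix (A' × X') (A × X) ℝ}
    (hΦ : IsStoch Φ) (hf : IsStoch f) (hg : IsStoch g) : IsStoch (slideS f g Φ) :=
  ((isStoch_one.kron hg).matmul ((hΦ.kron isStoch_one).reindexS _ _)).matmul (isStoch_one.kron hf)

lemma marg_slideS {A A' X X' Y Y' Z : Type} [Fintype A] [Fintype A'] [Fintype X] [Fintype X']
    [Fintype Y] [Fintype Y'] [Fintype Z]
    (f : Matrix (X × Z) Y ℝ) {g : Matrix Y' (X' × Z) ℝ} (hg : IsStoch g)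
    (Φ : Matrix (A' × X') (A × X) ℝ) (ρ : Y → ℝ) :
    marg (slideS f g Φ) ρ = marg Φ (fun x => ∑ z : Z, ∑ y : Y, f (x, z) y * ρ y) := by
  ext a' a
  simp only [marg, margE, Matrix.of_apply, one_mul, slideS_apply, Finset.sum_mul]
  -- LHS: ∑ y' ∑ y ∑ x' ∑ z ∑ x, g y' (x',z) * Φ (a',x') (a,x) * f (x,z) y * ρ y
  -- RHS: ∑ x' ∑ x, Φ (a',x') (a,x) * (∑ z ∑ y, f (x,z) y * ρ y)
  rw [Finset.sum_comm]
  have step1 : ∀ y : Y, (∑ y' : Y', ∑ x' : X', ∑ z : Z, ∑ x : X,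
      g y' (x', z) * Φ (a', x') (a, x) * f (x, z) y * ρ y)
      = ∑ x' : X', ∑ z : Z, ∑ x : X, Φ (a', x') (a, x) * (f (x, z) y * ρ y) := by
    intro y
    rw [Finset.sum_comm]
    refine Finset.sum_congr rfl fun x' _ => ?_
    rw [Finset.sum_comm]
    refine Finset.sum_congr rfl fun z _ => ?_
    rw [Finset.sum_comm]
    refine Finset.sum_congr rfl fun x _ => ?_
    simp only [mul_assoc, ← Finset.sum_mul]
    rw [hg.2 (x', z), one_mul]
  simp only [step1, Finset.mul_sum]
  -- LHS: ∑ y, ∑ x', ∑ z, ∑ x, E  ; RHS: ∑ x', ∑ x, ∑ z, ∑ y, E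
  rw [Finset.sum_comm]
  refine Finset.sum_congr rfl fun x' _ => ?_
  conv_lhs => rw [Finset.sum_comm]
  conv_rhs => rw [Finset.sum_comm]
  exact Finset.sum_congr rfl fun z _ => Finset.sum_comm
lemma dExt_slideS {A A' X X' Y Y' Z : Type} [Fintype A] [Fintype A'] [Fintype X] [Fintype X']
    [Fintype Y] [Fintype Y'] [Fintype Z] {K : Set (Matrix A' A ℝ)}
    {f : Matrix (X × Z) Y ℝ} {g : Matrix Y' (X' × Z) ℝ} {Φ : Matrix (A' × X') (A × X) ℝ}
    (hΦ : Φ ∈ dExtS K X X') (hf : IsStoch f) (hg : IsStoch g) :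
    slideS f g Φ ∈ dExtS K Y Y' := by
  refine ⟨hΦ.1.slideS' hf hg, fun ρ hρ => ?_⟩
  rw [marg_slideS f hg]
  refine hΦ.2 _ ⟨fun x => Finset.sum_nonneg fun z _ => Finset.sum_nonneg fun y _ =>
    mul_nonneg (hf.1 _ _) (hρ.1 _), ?_⟩
  calc (∑ x : X, ∑ z : Z, ∑ y : Y, f (x, z) y * ρ y)
      = ∑ x : X, ∑ y : Y, ∑ z : Z, f (x, z) y * ρ y :=
        Finset.sum_congr rfl fun x _ => Finset.sum_comm
    _ = ∑ y : Y, ∑ x : X, ∑ z : Z, f (x, z) y * ρ y := Finset.sum_comm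
    _ = ∑ y : Y, ρ y := by
        refine Finset.sum_congr rfl fun y _ => ?_
        calc (∑ x : X, ∑ z : Z, f (x, z) y * ρ y)
            = ∑ p : X × Z, f p y * ρ y := (Fintype.sum_prod_type (f := fun p : X × Z => f p y * ρ y)).symm
          _ = (∑ p : X × Z, f p y) * ρ y := (Finset.sum_mul _ _ _).symm
          _ = ρ y := by rw [hf.2 y, one_mul]
    _ = 1 := hρ.2
instance ftUnitOF : Fintype Unit := Fintype.ofFinite Unit
instance ftBoolOF : Fintype Bool := Fintype.ofFinite Bool
instance ftBool2OF : Fintype (Bool × Bool) := Fintype.ofFinite (Bool × Bool)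

lemma sum_bool_of {M : Type} [AddCommMonoid M] [i : Fintype Bool] (f : Bool → M) :
    ∑ b, f b = f true + f false := by
  obtain rfl : i = Bool.fintype := Subsingleton.elim _ _
  exact Fintype.sum_bool f

lemma card_bool_of [i : Fintype Bool] : Fintype.card Bool = 2 := by
  obtain rfl : i = Bool.fintype := Subsingleton.elim _ _
  rfl

lemma card_unit_of [i : Fintype Unit] : Fintype.card Unit = 1 := by
  obtain rfl : i = PUnit.fintype := Subsingleton.elim _ _
  rfl

abbrev UU : FintypeCat.{0} := FintypeCat.of Unit
abbrev BB : FintypeCat.{0} := FintypeCat.of Bool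
abbrev B2 : FintypeCat.{0} := FintypeCat.of (Bool × Bool)

lemma sum_UU {i : Fintype ↥UU} (f : ↥UU → ℝ) : ∑ x : ↥UU, f x = f () :=
  Fintype.sum_unique f

lemma sum_BB {i : Fintype ↥BB} (f : ↥BB → ℝ) : ∑ x : ↥BB, f x = f false + f true :=
  (sum_bool_of (i := i) f).trans (add_comm _ _)

lemma prob_one_UU : IsProb (fun _ : ↥UU => (1:ℝ)) := ⟨fun _ => zero_le_one, by rw [sum_UU]⟩

/-- The flip-second-bit-when-first-is-false involution. -/
def Fflip : Bool × Bool → Bool × Bool := fun p => (p.1, if p.1 then p.2 else !p.2)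

lemma Fflip_invol : Function.Involutive Fflip := by
  rintro ⟨a, b⟩; cases a <;> cases b <;> rfl

/-- Prepare the control value `c₀`. -/
def prepM (c₀ : Bool) : Matrix (Bool × Unit) Unit ℝ := fun p _ => if p.1 = c₀ then 1 else 0
/-- Identity on the `Bool` ancilla. -/
def gidM : Matrix Bool (Bool × Unit) ℝ := fun y p => if y = p.1 then 1 else 0
/-- Prepare a uniformly random control, correlated with the bypass wire. -/
def fΔM : Matrix (Bool × Bool) Unit ℝ := fun p _ => if p.1 = p.2 then 1/2 else 0
/-- Identity on outcome and control copy. -/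
def g2M : Matrix (Bool × Bool) (Bool × Bool) ℝ := fun y p => if y = p then 1 else 0
/-- The unique state on the trivial ancilla. -/
def f1M : Matrix (Unit × Unit) Unit ℝ := fun _ _ => 1
/-- The conditional-flip post-processing. -/
def gPM : Matrix (Bool × Bool) ((Bool × Bool) × Unit) ℝ := fun y p => if y = Fflip p.1 then 1 else 0
/-- Merge both outcomes into `true`. -/
def gmergeM : Matrix Bool (Bool × Unit) ℝ := fun y _ => if y = true then 1 else 0

lemma isStoch_prepM (c₀ : Bool) : IsStoch (prepM c₀) := by
  refine ⟨fun p _ => by unfold prepM; split <;> norm_num, fun _ => ?_⟩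
  unfold prepM
  rw [Fintype.sum_prod_type]
  cases c₀ <;> norm_num [sum_bool_of]

lemma isStoch_gidM : IsStoch gidM := by
  refine ⟨fun y p => by unfold gidM; split <;> norm_num, fun p => ?_⟩
  unfold gidM
  cases hp : p.1 <;> simp [sum_bool_of, hp]

lemma isStoch_fΔM : @IsStoch (Bool × Bool) Unit (instFintypeProd Bool Bool) fΔM := by
  refine ⟨fun p _ => by unfold fΔM; split <;> norm_num, fun _ => ?_⟩
  unfold fΔM
  rw [Fintype.sum_prod_type]
  norm_num [sum_bool_of, card_bool_of]

lemma isStoch_g2M : IsStoch g2M := by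
  refine ⟨fun y p => by unfold g2M; split <;> norm_num, fun p => by simp [g2M]⟩

lemma isStoch_f1M : IsStoch f1M := ⟨fun _ _ => zero_le_one, fun _ => by simp [f1M]⟩

lemma isStoch_gPM : IsStoch gPM := by
  refine ⟨fun y p => by unfold gPM; split <;> norm_num, fun p => by simp [gPM]⟩

lemma isStoch_gmergeM : IsStoch gmergeM := by
  refine ⟨fun y p => by unfold gmergeM; split <;> norm_num,
    fun p => by simp [gmergeM, sum_bool_of]⟩

/-- Evaluation of a slide by a deterministic involution on the ancilla. -/
lemma slide_det_eval {C C' : Type} [Fintype C] [Fintype C']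
    (Γ : Matrix (C' × (Bool × Bool)) (C × Unit) ℝ)
    (c' : C') (w : Bool × Bool) (c : C) (u : Unit) :
    slideS f1M gPM Γ (c', w) (c, u) = Γ (c', Fflip w) (c, ()) := by
  rw [slideS_apply]
  have hiff : ∀ x' : Bool × Bool, (if w = Fflip x' then (1:ℝ) else 0)
      = if x' = Fflip w then 1 else 0 := by
    intro x'
    rcases eq_or_ne x' (Fflip w) with h | h
    · subst h; rw [if_pos (Fflip_invol w).symm, if_pos rfl]
    · rw [if_neg fun hc => h (by rw [hc, Fflip_invol]), if_neg h]
  simp only [f1M, gPM, Fintype.sum_unique, hiff, mul_one, ite_mul, one_mul, zero_mul,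
    Finset.sum_ite_eq', Finset.mem_univ, if_true]

/-- Evaluation of the merge-outcomes slide. -/
lemma slide_merge_eval {C C' : Type} [Fintype C] [Fintype C']
    (Γ : Matrix (C' × Bool) (C × Unit) ℝ) (c' : C') (w : Bool) (c : C) (u : Unit) :
    slideS f1M gmergeM Γ (c', w) (c, u)
      = if w = true then Γ (c', false) (c, ()) + Γ (c', true) (c, ()) else 0 := by
  rw [slideS_apply]
  simp only [f1M, gmergeM, Fintype.sum_unique, mul_one, sum_bool_of, ite_mul, one_mul,
    zero_mul]
  cases w <;> simp [add_comm]

/-- Evaluation of the prepare-control slide. -/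
lemma slide_prep_eval {C C' : Type} [Fintype C] [Fintype C'] (c₀ : Bool)
    (Γ : Matrix (C' × Bool) (C × Bool) ℝ) (c' : C') (w : Bool) (c : C) (u : Unit) :
    slideS (prepM c₀) gidM Γ (c', w) (c, u) = Γ (c', w) (c, c₀) := by
  rw [slideS_apply]
  simp only [prepM, gidM, Fintype.sum_unique, sum_bool_of]
  cases w <;> cases c₀ <;> simp

/-- Evaluation of the randomized-control slide. -/
lemma slide_half_eval {C C' : Type} [Fintype C] [Fintype C']
    (Γ : Matrix (C' × Bool) (C × Bool) ℝ) (c' : C') (w : Bool × Bool) (c : C) (u : Unit) :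
    slideS fΔM g2M Γ (c', w) (c, u) = Γ (c', w.1) (c, w.2) / 2 := by
  rw [slideS_apply]
  simp only [fΔM, g2M, Fintype.sum_unique, sum_bool_of]
  rcases w with ⟨v, cc⟩
  cases v <;> cases cc <;> simp [Prod.ext_iff] <;> ring
section Core
variable {A A' B B' : FintypeCat.{0}} {K : Set (Matrix A' A ℝ)} {M : Set (Matrix B' B ℝ)}

lemma sl0_zero (S : LocAppS K M) (Ψ : ↥(dExtS K UU BB))
    (h0 : ∀ a' a, Ψ.1 (a', false) (a, ()) = 0) (b' : B') (b : B) :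
    (S.app UU BB Ψ).1 (b', false) (b, ()) = 0 := by
  have hEq : slideS f1M gmergeM Ψ.1 = Ψ.1 := by
    ext ⟨a', w⟩ ⟨a, u⟩
    rw [slide_merge_eval]
    cases w
    · exact (h0 a' a).symm
    · rw [if_pos rfl, h0 a' a, zero_add]
  have h1 : slideS f1M gmergeM Ψ.1 ∈ dExtS K UU BB := dExt_slideS Ψ.2 isStoch_f1M isStoch_gmergeM
  have key : (S.app UU BB Ψ).1 = slideS f1M gmergeM (S.app UU BB Ψ).1 := by
    conv_lhs => rw [show Ψ = ⟨_, h1⟩ from Subtype.ext hEq.symm]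
    exact S.natural UU BB UU BB UU f1M gmergeM isStoch_f1M isStoch_gmergeM Ψ h1
  rw [key, slide_merge_eval, if_neg (by simp)]

end Core
section Core2
variable {A A' B B' : FintypeCat.{0}} {K : Set (Matrix A' A ℝ)} {M : Set (Matrix B' B ℝ)}

lemma core (hKconv : IsConvexSetS K) (S : LocAppS K M) (Ψ Ψ' : ↥(dExtS K UU BB))
    (h0 : ∀ a' a, Ψ.1 (a', false) (a, ()) = Ψ'.1 (a', false) (a, ()))
    (b' : B') (b : B) :
    (S.app UU BB Ψ).1 (b', false) (b, ()) = (S.app UU BB Ψ').1 (b', false) (b, ()) := by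
  classical
  set Ω : Matrix (↥A' × Bool) (↥A × Bool) ℝ :=
    fun p q => if q.2 = true then Ψ'.1 (p.1, p.2) (q.1, ()) else Ψ.1 (p.1, p.2) (q.1, ())
    with hΩdef
  have hΩ : Ω ∈ dExtS K BB BB := by
    refine ⟨⟨?_, ?_⟩, ?_⟩
    · rintro ⟨a', x'⟩ ⟨a, c⟩
      simp only [hΩdef]; split
      · exact Ψ'.2.1.1 _ _
      · exact Ψ.2.1.1 _ _
    · rintro ⟨a, c⟩
      cases c
      · simpa [hΩdef] using Ψ.2.1.2 (a, ())
      · simpa [hΩdef] using Ψ'.2.1.2 (a, ())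
    · intro ρc hρc
      have hsum : ρc false + ρc true = 1 := by
        have h2 := hρc.2; rwa [sum_BB] at h2
      have hmem := hKconv _ (Ψ.2.2 (fun _ => 1) prob_one_UU)
        _ (Ψ'.2.2 (fun _ => 1) prob_one_UU) (ρc false) (hρc.1 _)
        (by nlinarith [hρc.1 true])
      have h1p : 1 - ρc false = ρc true := by linarith
      rw [h1p] at hmem
      convert hmem using 1
      ext a' a
      simp only [marg, margE, Matrix.of_apply, Matrix.add_apply, Matrix.smul_apply,
        sum_BB, sum_UU, hΩdef, one_mul, mul_one, smul_eq_mul]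
      rw [sum_BB, sum_BB, sum_BB, sum_BB, sum_BB, sum_UU, sum_UU, sum_UU, sum_UU]
      rw [if_neg Bool.false_ne_true, if_neg Bool.false_ne_true, if_pos rfl, if_pos rfl]
      ring
  set SΩ := S.app BB BB ⟨Ω, hΩ⟩ with hSΩdef
  -- extraction of Ψ (control false) and Ψ' (control true)
  have hslideΨ : slideS (prepM false) gidM Ω = Ψ.1 := by
    ext ⟨a', w⟩ ⟨a, u⟩
    rw [slide_prep_eval]
    simp [hΩdef]
  have hslideΨ' : slideS (prepM true) gidM Ω = Ψ'.1 := by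
    ext ⟨a', w⟩ ⟨a, u⟩
    rw [slide_prep_eval]
    simp [hΩdef]
  have natΨ : (S.app UU BB ⟨slideS (prepM false) gidM Ω, hslideΨ ▸ Ψ.2⟩).1
      = slideS (prepM false) gidM SΩ.1 :=
    S.natural BB BB UU BB UU _ _ (isStoch_prepM false) isStoch_gidM ⟨Ω, hΩ⟩ (hslideΨ ▸ Ψ.2)
  have natΨ' : (S.app UU BB ⟨slideS (prepM true) gidM Ω, hslideΨ' ▸ Ψ'.2⟩).1
      = slideS (prepM true) gidM SΩ.1 :=
    S.natural BB BB UU BB UU _ _ (isStoch_prepM true) isStoch_gidM ⟨Ω, hΩ⟩ (hslideΨ' ▸ Ψ'.2)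
  have eΨ : (S.app UU BB Ψ).1 (b', false) (b, ()) = SΩ.1 (b', false) (b, false) := by
    have h1 : Ψ = ⟨slideS (prepM false) gidM Ω, hslideΨ ▸ Ψ.2⟩ := Subtype.ext hslideΨ.symm
    rw [h1, natΨ, slide_prep_eval]
  have eΨ' : (S.app UU BB Ψ').1 (b', false) (b, ()) = SΩ.1 (b', false) (b, true) := by
    have h1 : Ψ' = ⟨slideS (prepM true) gidM Ω, hslideΨ' ▸ Ψ'.2⟩ := Subtype.ext hslideΨ'.symm
    rw [h1, natΨ', slide_prep_eval]
  rw [eΨ, eΨ']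
  -- the randomized-control channel Ξ
  have hΞ : slideS fΔM g2M Ω ∈ dExtS K UU B2 := dExt_slideS hΩ isStoch_fΔM isStoch_g2M
  set ΞS := S.app UU B2 ⟨slideS fΔM g2M Ω, hΞ⟩ with hΞSdef
  have natΞ : ΞS.1 = slideS fΔM g2M SΩ.1 :=
    S.natural BB BB UU B2 BB _ _ isStoch_fΔM isStoch_g2M ⟨Ω, hΩ⟩ hΞ
  -- flip trick
  have hflip : slideS f1M gPM (slideS fΔM g2M Ω) = slideS fΔM g2M Ω := by
    ext ⟨a', w⟩ ⟨a, u⟩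
    rw [slide_det_eval, slide_half_eval, slide_half_eval]
    rcases w with ⟨v, cc⟩
    cases v
    · cases cc <;>
        · simp only [Fflip, Bool.false_eq_true, if_false, hΩdef]
          simp [h0 a' a]
    · rfl
  have hΞ2 : slideS f1M gPM (slideS fΔM g2M Ω) ∈ dExtS K UU B2 :=
    dExt_slideS hΞ isStoch_f1M isStoch_gPM
  have natflip : (S.app UU B2 ⟨slideS f1M gPM (slideS fΔM g2M Ω), hΞ2⟩).1
      = slideS f1M gPM ΞS.1 :=
    S.natural UU B2 UU B2 UU _ _ isStoch_f1M isStoch_gPM ⟨slideS fΔM g2M Ω, hΞ⟩ hΞ2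
  have keyflip : ΞS.1 = slideS f1M gPM ΞS.1 := by
    conv_lhs => rw [hΞSdef, show (⟨slideS fΔM g2M Ω, hΞ⟩ : ↥(dExtS K UU B2))
      = ⟨slideS f1M gPM (slideS fΔM g2M Ω), hΞ2⟩ from Subtype.ext hflip.symm]
    exact natflip
  have flipval : ΞS.1 (b', (false, false)) (b, ()) = ΞS.1 (b', (false, true)) (b, ()) := by
    conv_lhs => rw [keyflip]
    rw [slide_det_eval]
    rfl
  have e2 : ∀ w : Bool × Bool, ΞS.1 (b', w) (b, ()) = SΩ.1 (b', w.1) (b, w.2) / 2 := by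
    intro w
    rw [natΞ, slide_half_eval]
  have l1 := e2 (false, false)
  have l2 := e2 (false, true)
  rw [flipval, l2] at l1
  linarith

end Core2
/-- Prepare the normalised state `ρ/r`. -/
def fρM {X : Type} (ρ : X → ℝ) (r : ℝ) : Matrix (X × Unit) Unit ℝ := fun p _ => ρ p.1 / r
/-- Measure the scaled effect `r·σ/t` (outcome `false`) or its complement. -/
def gσM {X' : Type} (σ : X' → ℝ) (r t : ℝ) : Matrix Bool (X' × Unit) ℝ :=
  fun b p => if b = false then r * σ p.1 / t else 1 - r * σ p.1 / t

lemma isStoch_fρM {X : Type} [Fintype X] {ρ : X → ℝ} {r : ℝ} (hρ : ∀ x, 0 ≤ ρ x)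
    (hr : 0 < r) (hsum : ∑ x, ρ x = r) : IsStoch (fρM ρ r) := by
  refine ⟨fun p _ => div_nonneg (hρ _) hr.le, fun _ => ?_⟩
  rw [Fintype.sum_prod_type]
  simp only [fρM, Fintype.sum_unique, Finset.sum_const, Finset.card_univ, card_unit_of,
    one_smul]
  rw [← Finset.sum_div, hsum, div_self hr.ne']

lemma isStoch_gσM {X' : Type} [Fintype X'] {σ : X' → ℝ} {r t : ℝ} (hσ : ∀ x', 0 ≤ σ x')
    (hr : 0 ≤ r) (ht : 0 < t) (hb : ∀ x', r * σ x' ≤ t) : IsStoch (gσM σ r t) := by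
  constructor
  · intro b p
    unfold gσM; split
    · exact div_nonneg (mul_nonneg hr (hσ _)) ht.le
    · have := hb p.1
      have h1 : r * σ p.1 / t ≤ 1 := (div_le_one ht).2 this
      linarith
  · intro p
    rw [sum_bool_of]
    simp only [gσM, Bool.true_eq_false, if_false, if_true]
    ring

lemma slide_rs_eval {C C' X X' : Type} [Fintype C] [Fintype C'] [Fintype X] [Fintype X']
    (Γ : Matrix (C' × X') (C × X) ℝ) (ρ : X → ℝ) (σ : X' → ℝ) {r t : ℝ}
    (hr : r ≠ 0) (c' : C') (c : C) (u : Unit) :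
    slideS (fρM ρ r) (gσM σ r t) Γ (c', false) (c, u) = margE Γ ρ σ c' c / t := by
  rw [slideS_apply]
  simp only [fρM, gσM, margE, Matrix.of_apply, Fintype.sum_unique, if_true]
  rw [Finset.sum_div]
  refine Finset.sum_congr rfl fun x' _ => ?_
  rw [Finset.sum_div]
  refine Finset.sum_congr rfl fun x _ => ?_
  simp only [div_eq_mul_inv]
  linear_combination (σ x' * Γ (c', x') (c, x) * ρ x * t⁻¹) * mul_inv_cancel₀ hr

section Outer
variable {A A' B B' : FintypeCat.{0}} {K : Set (Matrix A' A ℝ)} {M : Set (Matrix B' B ℝ)}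

/-- If a reduction of a dilation of `K` vanishes, so does the matching reduction of its
image under a locally-applicable transformation. -/
lemma zero_side (S : LocAppS K M) (X X' : FintypeCat.{0}) (Φ : ↥(dExtS K X X'))
    (ρ : ↥X → ℝ) (hρ : ∀ x, 0 ≤ ρ x) (σ : ↥X' → ℝ) (hσ : ∀ x', 0 ≤ σ x')
    {r t : ℝ} (hr : 0 < r) (hsum : ∑ x, ρ x = r) (ht : 0 < t) (hb : ∀ x', r * σ x' ≤ t)
    (h0 : margE Φ.1 ρ σ = 0) : margE (S.app X X' Φ).1 ρ σ = 0 := by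
  have hfρ := isStoch_fρM hρ hr hsum
  have hgσ := isStoch_gσM hσ hr.le ht hb
  have hmem : slideS (fρM ρ r) (gσM σ r t) Φ.1 ∈ dExtS K UU BB := dExt_slideS Φ.2 hfρ hgσ
  have nat : (S.app UU BB ⟨slideS (fρM ρ r) (gσM σ r t) Φ.1, hmem⟩).1
      = slideS (fρM ρ r) (gσM σ r t) (S.app X X' Φ).1 :=
    S.natural X X' UU BB UU _ _ hfρ hgσ Φ hmem
  have hz := sl0_zero S ⟨slideS (fρM ρ r) (gσM σ r t) Φ.1, hmem⟩ ?_
  · ext b' b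
    have := hz b' b
    rw [nat, slide_rs_eval _ ρ σ hr.ne'] at this
    have := (div_eq_zero_iff.mp this).resolve_right ht.ne'
    simpa using this
  · intro a' a
    show slideS (fρM ρ r) (gσM σ r t) Φ.1 (a', false) (a, ()) = 0
    rw [slide_rs_eval _ ρ σ hr.ne', h0]
    simp

end Outer

/-- **Statement 14.** Every locally-applicable transformation between convex sets of
column-stochastic matrices extends to a well-defined function on the operational closure:
whenever two state/effect reductions of members of dilation extensions of `K` agree, the
corresponding reductions of their images agree. -/
theorem stoch_locApp_extends_to_operational_closure (A A' B B' : FintypeCat.{0})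
    (K : Set (Matrix A' A ℝ)) (M : Set (Matrix B' B ℝ))
    (hK : ∀ φ ∈ K, IsStoch φ) (hM : ∀ φ ∈ M, IsStoch φ)
    (hKconv : IsConvexSetS K) (hMconv : IsConvexSetS M)
    (S : LocAppS K M) (X X' Y Y' : FintypeCat.{0})
    (Φ : ↥(dExtS K X X')) (Φ' : ↥(dExtS K Y Y'))
    (ρ : X → ℝ) (hρ : ∀ x, 0 ≤ ρ x) (ρ' : Y → ℝ) (hρ' : ∀ y, 0 ≤ ρ' y)
    (σ : X' → ℝ) (hσ : ∀ x', 0 ≤ σ x') (σ' : Y' → ℝ) (hσ' : ∀ y', 0 ≤ σ' y')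
    (heq : margE Φ.1 ρ σ = margE Φ'.1 ρ' σ') :
    margE (S.app X X' Φ).1 ρ σ = margE (S.app Y Y' Φ').1 ρ' σ' := by
  classical
  have hs : (0:ℝ) ≤ ∑ x', σ x' := Finset.sum_nonneg fun i _ => hσ i
  have hs' : (0:ℝ) ≤ ∑ y', σ' y' := Finset.sum_nonneg fun i _ => hσ' i
  have hrn : (0:ℝ) ≤ ∑ x, ρ x := Finset.sum_nonneg fun i _ => hρ i
  have hrn' : (0:ℝ) ≤ ∑ y, ρ' y := Finset.sum_nonneg fun i _ => hρ' i
  by_cases hr : (∑ x, ρ x) = 0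
  · -- left side degenerate
    have hρ0 : ∀ x, ρ x = 0 := fun x =>
      (Finset.sum_eq_zero_iff_of_nonneg (fun i _ => hρ i)).1 hr x (Finset.mem_univ x)
    have hz1 : margE (S.app X X' Φ).1 ρ σ = 0 := by ext b' b; simp [margE, hρ0]
    have hz0 : margE Φ.1 ρ σ = 0 := by ext a' a; simp [margE, hρ0]
    rw [hz1]
    rw [hz0] at heq
    by_cases hr' : (∑ y, ρ' y) = 0
    · have hρ'0 : ∀ y, ρ' y = 0 := fun y =>
        (Finset.sum_eq_zero_iff_of_nonneg (fun i _ => hρ' i)).1 hr' y (Finset.mem_univ y)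
      ext b' b; simp [margE, hρ'0]
    · have hpos : (0:ℝ) < ∑ y, ρ' y := lt_of_le_of_ne hrn' (Ne.symm hr')
      have ht : (0:ℝ) < (∑ y, ρ' y) * (∑ y', σ' y') + 1 := by nlinarith
      refine (zero_side S Y Y' Φ' ρ' hρ' σ' hσ' (r := ∑ y, ρ' y)
        (t := (∑ y, ρ' y) * (∑ y', σ' y') + 1) hpos rfl ht (fun y' => ?_) heq.symm).symm
      have h1 : σ' y' ≤ ∑ a, σ' a := Finset.single_le_sum (fun i _ => hσ' i) (Finset.mem_univ y')
      nlinarith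
  · have hposl : (0:ℝ) < ∑ x, ρ x := lt_of_le_of_ne hrn (Ne.symm hr)
    by_cases hr' : (∑ y, ρ' y) = 0
    · -- right side degenerate
      have hρ'0 : ∀ y, ρ' y = 0 := fun y =>
        (Finset.sum_eq_zero_iff_of_nonneg (fun i _ => hρ' i)).1 hr' y (Finset.mem_univ y)
      have hz1 : margE (S.app Y Y' Φ').1 ρ' σ' = 0 := by ext b' b; simp [margE, hρ'0]
      have hz0 : margE Φ'.1 ρ' σ' = 0 := by ext a' a; simp [margE, hρ'0]
      rw [hz1]
      rw [hz0] at heq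
      have ht : (0:ℝ) < (∑ x, ρ x) * (∑ x', σ x') + 1 := by nlinarith
      refine zero_side S X X' Φ ρ hρ σ hσ (r := ∑ x, ρ x)
        (t := (∑ x, ρ x) * (∑ x', σ x') + 1) hposl rfl ht (fun x' => ?_) heq
      have h1 : σ x' ≤ ∑ a, σ a := Finset.single_le_sum (fun i _ => hσ i) (Finset.mem_univ x')
      nlinarith
    · -- main case
      have hposr : (0:ℝ) < ∑ y, ρ' y := lt_of_le_of_ne hrn' (Ne.symm hr')
      set r : ℝ := ∑ x, ρ x with hrdef
      set r' : ℝ := ∑ y, ρ' y with hr'def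
      set t : ℝ := r * (∑ x', σ x') + r' * (∑ y', σ' y') + 1 with htdef
      have ht : (0:ℝ) < t := by nlinarith
      have hb : ∀ x', r * σ x' ≤ t := by
        intro x'
        have h1 : σ x' ≤ ∑ a, σ a := Finset.single_le_sum (fun i _ => hσ i) (Finset.mem_univ x')
        nlinarith
      have hb' : ∀ y', r' * σ' y' ≤ t := by
        intro y'
        have h1 : σ' y' ≤ ∑ a, σ' a := Finset.single_le_sum (fun i _ => hσ' i) (Finset.mem_univ y')
        nlinarith
      have hfρ := isStoch_fρM hρ hposl rfl
      have hgσ := isStoch_gσM hσ hposl.le ht hb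
      have hfρ' := isStoch_fρM hρ' hposr rfl
      have hgσ' := isStoch_gσM hσ' hposr.le ht hb'
      have hmem : slideS (fρM ρ r) (gσM σ r t) Φ.1 ∈ dExtS K UU BB :=
        dExt_slideS Φ.2 hfρ hgσ
      have hmem' : slideS (fρM ρ' r') (gσM σ' r' t) Φ'.1 ∈ dExtS K UU BB :=
        dExt_slideS Φ'.2 hfρ' hgσ'
      have nat : (S.app UU BB ⟨slideS (fρM ρ r) (gσM σ r t) Φ.1, hmem⟩).1
          = slideS (fρM ρ r) (gσM σ r t) (S.app X X' Φ).1 :=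
        S.natural X X' UU BB UU _ _ hfρ hgσ Φ hmem
      have nat' : (S.app UU BB ⟨slideS (fρM ρ' r') (gσM σ' r' t) Φ'.1, hmem'⟩).1
          = slideS (fρM ρ' r') (gσM σ' r' t) (S.app Y Y' Φ').1 :=
        S.natural Y Y' UU BB UU _ _ hfρ' hgσ' Φ' hmem'
      have h0 : ∀ a' a, (⟨slideS (fρM ρ r) (gσM σ r t) Φ.1, hmem⟩ :
            ↥(dExtS K UU BB)).1 (a', false) (a, ())
          = (⟨slideS (fρM ρ' r') (gσM σ' r' t) Φ'.1, hmem'⟩ :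
            ↥(dExtS K UU BB)).1 (a', false) (a, ()) := by
        intro a' a
        show slideS (fρM ρ r) (gσM σ r t) Φ.1 (a', false) (a, ())
          = slideS (fρM ρ' r') (gσM σ' r' t) Φ'.1 (a', false) (a, ())
        rw [slide_rs_eval _ ρ σ hposl.ne', slide_rs_eval _ ρ' σ' hposr.ne', heq]
      ext b' b
      have hc := core hKconv S _ _ h0 b' b
      rw [nat, nat', slide_rs_eval _ ρ σ hposl.ne', slide_rs_eval _ ρ' σ' hposr.ne'] at hc
      exact mul_right_cancel₀ ht.ne' (by
        have := (div_eq_div_iff ht.ne' ht.ne').1 hc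
        exact this)
end
end
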